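/- arXiv:1911.00613 — 4 statements merged into one kernel-verified Lean document; each statement's English description precedes it below -/
import Mathlib

section
/- Let (𝒞,𝒞⊥) be a complete cotorsion pair in ℰ. Every morphism f : A → B with A, B ∈ 𝒞 factors as f = p ∘ i where i is a cofibration and p is an acyclic fibration. If moreover the pair is hereditary, then p may be chosen so that its kernel lies in 𝒞⊥ ∩ 𝒞, i.e. p is an acyclic fibration that is an admissible epimorphism between objects of 𝒞 with kernel in 𝒞. -/
open CategoryTheory CategoryTheory.Limits

universe v u

variable {𝒜 : Type u} [Category.{v} 𝒜] [Abelian 𝒜]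

/-- `(f, g)` forms a short exact sequence `0 ⟶ X ⟶ Y ⟶ Z ⟶ 0` in the ambient
abelian category `𝒜`. -/
def IsShortExactSeq {X Y Z : 𝒜} (f : X ⟶ Y) (g : Y ⟶ Z) : Prop :=
  ∃ w : f ≫ g = 0, (ShortComplex.mk f g w).ShortExact

/-- A class of objects is closed under isomorphisms. -/
def IsoClosed (P : 𝒜 → Prop) : Prop := ∀ ⦃X Y : 𝒜⦄, (X ≅ Y) → P X → P Y

/-- `Ext¹(X, Y) = 0` relative to the exact subcategory determined by `E`:
every short exact sequence `0 ⟶ Y ⟶ M ⟶ X ⟶ 0` in `E` splits. -/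
def Ext1IsZero (E : 𝒜 → Prop) (X Y : 𝒜) : Prop :=
  ∀ ⦃M : 𝒜⦄ (f : Y ⟶ M) (g : M ⟶ X), E M → IsShortExactSeq f g →
    ∃ r : M ⟶ Y, f ≫ r = 𝟙 Y

/-- `(C, I)` is a cotorsion pair in the exact subcategory of `𝒜` determined by
the class of objects `E`: the two classes are each other's orthogonal
complement with respect to `Ext¹`. -/
structure IsCotorsionPair (E C I : 𝒜 → Prop) : Prop where
  right_eq : ∀ Y, I Y ↔ (E Y ∧ ∀ ⦃X⦄, C X → Ext1IsZero E X Y)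
  left_eq : ∀ X, C X ↔ (E X ∧ ∀ ⦃Y⦄, I Y → Ext1IsZero E X Y)

/-- The cotorsion pair `(C, I)` in `E` is complete: every object of `E` admits
both kinds of approximation sequences. -/
def IsCompleteCP (E C I : 𝒜 → Prop) : Prop :=
  (∀ A, E A → ∃ (Y P : 𝒜) (f : A ⟶ Y) (g : Y ⟶ P),
      I Y ∧ C P ∧ IsShortExactSeq f g) ∧
  (∀ A, E A → ∃ (Y P : 𝒜) (f : Y ⟶ P) (g : P ⟶ A),
      I Y ∧ C P ∧ IsShortExactSeq f g)

/-- The cotorsion pair is hereditary: `C` is closed under kernels of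
admissible epimorphisms in `E`. -/
def IsHereditaryCP (E C : 𝒜 → Prop) : Prop :=
  ∀ ⦃X Y Z : 𝒜⦄ (f : X ⟶ Y) (g : Y ⟶ Z),
    IsShortExactSeq f g → E X → C Y → C Z → C X

/-- A cofibration: an admissible monomorphism between objects of `C` whose
cokernel lies in `C`. -/
def IsCofib (C : 𝒜 → Prop) {X Y : 𝒜} (f : X ⟶ Y) : Prop :=
  C X ∧ C Y ∧ ∃ (W : 𝒜) (g : Y ⟶ W), C W ∧ IsShortExactSeq f g

/-- An acyclic fibration: an admissible epimorphism in `E` whose kernel lies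
in `I`. -/
def IsAcyclicFib (E I : 𝒜 → Prop) {Y Z : 𝒜} (g : Y ⟶ Z) : Prop :=
  E Y ∧ E Z ∧ ∃ (K : 𝒜) (k : K ⟶ Y), I K ∧ IsShortExactSeq k g

/-- An acyclic cofibration: an admissible monomorphism between objects of `C`
whose cokernel lies in `C ∩ Z`. -/
def IsAcyclicCofib (C Zc : 𝒜 → Prop) {X Y : 𝒜} (f : X ⟶ Y) : Prop :=
  C X ∧ C Y ∧ ∃ (W : 𝒜) (g : Y ⟶ W), C W ∧ Zc W ∧ IsShortExactSeq f g

/-- A weak equivalence: a morphism between objects of `C` that factors as an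
acyclic cofibration followed by an acyclic fibration. -/
def IsWeakEquiv (E C I Zc : 𝒜 → Prop) {X Y : 𝒜} (f : X ⟶ Y) : Prop :=
  C X ∧ C Y ∧ ∃ (M : 𝒜) (i : X ⟶ M) (p : M ⟶ Y),
    IsAcyclicCofib C Zc i ∧ IsAcyclicFib E I p ∧ i ≫ p = f

/-- The standing setup: a complete hereditary cotorsion pair `(Cc, Ip)` in the
exact subcategory of `𝒜` determined by the isomorphism-closed,
extension-closed class `E`, together with an isomorphism-closed class
`Zc ⊆ E` with `Ip ⊆ Zc`, such that `Zc ∩ Cc` is closed under extensions and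
under cokernels of admissible monomorphisms in `Cc`. -/
structure CotorsionSetup (E Cc Ip Zc : 𝒜 → Prop) : Prop where
  isoE : IsoClosed E
  isoC : IsoClosed Cc
  isoI : IsoClosed Ip
  isoZ : IsoClosed Zc
  extClosedE : ∀ ⦃X Y Z : 𝒜⦄ (f : X ⟶ Y) (g : Y ⟶ Z),
    IsShortExactSeq f g → E X → E Z → E Y
  cp : IsCotorsionPair E Cc Ip
  complete : IsCompleteCP E Cc Ip
  hereditary : IsHereditaryCP E Cc
  zSubE : ∀ ⦃X⦄, Zc X → E X
  iSubZ : ∀ ⦃X⦄, Ip X → Zc X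
  zcExtClosed : ∀ ⦃X Y Z : 𝒜⦄ (f : X ⟶ Y) (g : Y ⟶ Z), IsShortExactSeq f g →
    Cc X → Cc Y → Cc Z → Zc X → Zc Z → Zc Y
  zcCokerClosed : ∀ ⦃X Y Z : 𝒜⦄ (f : X ⟶ Y) (g : Y ⟶ Z), IsShortExactSeq f g →
    Cc X → Cc Y → Cc Z → Zc X → Zc Y → Zc Z

section Auxiliary

/-- The split short exact sequence `0 ⟶ X ⟶ X ⊞ Y ⟶ Y ⟶ 0`. -/
lemma isShortExactSeq_biprod (X Y : 𝒜) :
    IsShortExactSeq (biprod.inl : X ⟶ X ⊞ Y) (biprod.snd : X ⊞ Y ⟶ Y) :=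
  ⟨by simp, (ShortComplex.Splitting.ofHasBinaryBiproduct X Y).shortExact⟩

/-- Any mono gives a short exact sequence with its cokernel. -/
lemma isShortExactSeq_cokernel {X Y : 𝒜} (i : X ⟶ Y) [Mono i] :
    IsShortExactSeq i (cokernel.π i) :=
  ⟨cokernel.condition i,
    { exact := ShortComplex.exact_of_g_is_cokernel _ (cokernelIsCokernel i),
      mono_f := ‹_›, epi_g := inferInstance }⟩

/-- Pullback of a short exact sequence along a morphism into the third term. -/
lemma isShortExactSeq_pullback {Y M X X1 : 𝒜} {a : Y ⟶ M} {b : M ⟶ X}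
    (w : a ≫ b = 0) (h : (ShortComplex.mk a b w).ShortExact) (s : X1 ⟶ X) :
    IsShortExactSeq (pullback.lift a 0 (by rw [w, zero_comp]) : Y ⟶ pullback b s)
      (pullback.snd b s) := by
  haveI : Mono a := h.mono_f
  haveI : Epi b := h.epi_g
  set k : Y ⟶ pullback b s := pullback.lift a 0 (by rw [w, zero_comp]) with hk
  have hkfst : k ≫ pullback.fst b s = a := pullback.lift_fst _ _ _
  have hksnd : k ≫ pullback.snd b s = 0 := pullback.lift_snd _ _ _
  haveI : Mono k := by
    have : Mono (k ≫ pullback.fst b s) := by rw [hkfst]; infer_instance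
    exact mono_of_mono k (pullback.fst b s)
  refine ⟨hksnd, ?_⟩
  refine { exact := ?_, mono_f := ‹_›, epi_g := inferInstance }
  apply ShortComplex.exact_of_f_is_kernel
  refine KernelFork.IsLimit.ofι _ _ (fun {T} z hz => ?_) (fun {T} z hz => ?_)
    (fun {T} z hz m hm => ?_)
  · -- lift
    exact (KernelFork.IsLimit.lift' h.fIsKernel (z ≫ pullback.fst b s)
      (by rw [Category.assoc, pullback.condition, ← Category.assoc, hz, zero_comp])).1
  · -- fac
    apply pullback.hom_ext
    · rw [Category.assoc, hkfst]
      exact (KernelFork.IsLimit.lift' h.fIsKernel _ _).2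
    · rw [Category.assoc, hksnd, comp_zero, hz]
  · rw [← cancel_mono k, hm]
    symm
    apply pullback.hom_ext
    · rw [Category.assoc, hkfst]
      exact (KernelFork.IsLimit.lift' h.fIsKernel _ _).2
    · rw [Category.assoc, hksnd, comp_zero, hz]

/-- Quotient of a short exact sequence by a lift of the first map of another
short exact sequence over the same third term. -/
lemma isShortExactSeq_quotient {Y M X X1 X2 : 𝒜} {a : Y ⟶ M} {b : M ⟶ X}
    (w : a ≫ b = 0) (h : (ShortComplex.mk a b w).ShortExact)
    {s : X1 ⟶ X} {t : X ⟶ X2} (w2 : s ≫ t = 0)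
    (h2 : (ShortComplex.mk s t w2).ShortExact)
    (ℓ : X1 ⟶ M) (hℓ : ℓ ≫ b = s) :
    IsShortExactSeq (a ≫ cokernel.π ℓ)
      (cokernel.desc ℓ (b ≫ t) (by rw [← Category.assoc, hℓ, w2])) := by
  haveI : Mono a := h.mono_f
  haveI : Epi b := h.epi_g
  haveI : Mono s := h2.mono_f
  haveI : Epi t := h2.epi_g
  haveI : Mono ℓ := by
    have : Mono (ℓ ≫ b) := by rw [hℓ]; infer_instance
    exact mono_of_mono ℓ b
  have hses := isShortExactSeq_cokernel ℓ
  obtain ⟨wℓ, hℓse⟩ := hses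
  set π := cokernel.π ℓ with hπ
  set v : cokernel ℓ ⟶ X2 := cokernel.desc ℓ (b ≫ t) (by rw [← Category.assoc, hℓ, w2])
    with hv
  have hπv : π ≫ v = b ≫ t := cokernel.π_desc _ _ _
  have hzero : (a ≫ π) ≫ v = 0 := by
    rw [Category.assoc, hπv, ← Category.assoc, w, zero_comp]
  haveI : Mono (a ≫ π) := by
    apply Preadditive.mono_of_cancel_zero
    intro T z hz
    rw [← Category.assoc] at hz
    obtain ⟨u, hu₀⟩ := KernelFork.IsLimit.lift' hℓse.fIsKernel (z ≫ a) hz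
    have hu : u ≫ ℓ = z ≫ a := hu₀
    have hu0 : u = 0 := by
      have : u ≫ s = 0 := by
        rw [← hℓ, ← Category.assoc, hu, Category.assoc, w, comp_zero]
      exact zero_of_comp_mono s this
    rw [hu0, zero_comp] at hu
    exact zero_of_comp_mono a hu.symm
  haveI : Epi v := by
    have : Epi (π ≫ v) := by rw [hπv]; exact epi_comp b t
    exact epi_of_epi π v
  refine ⟨hzero, ?_⟩
  refine { exact := ?_, mono_f := ‹_›, epi_g := ‹_› }
  rw [ShortComplex.exact_iff_exact_up_to_refinements]
  intro T x₂ hx₂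
  dsimp at x₂ hx₂ ⊢
  obtain ⟨T1, ρ1, hρ1, m, hm⟩ := surjective_up_to_refinements_of_epi π x₂
  have hmb : (m ≫ b) ≫ t = 0 := by
    rw [Category.assoc, ← hπv, ← Category.assoc, ← hm, Category.assoc, hx₂, comp_zero]
  obtain ⟨T2, ρ2, hρ2, x1, hx1⟩ := h2.exact.exact_up_to_refinements (m ≫ b) hmb
  dsimp at x1 hx1
  have hmb2 : (ρ2 ≫ m - x1 ≫ ℓ) ≫ b = 0 := by
    rw [Preadditive.sub_comp, Category.assoc, Category.assoc, hℓ, ← hx1, sub_self]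
  obtain ⟨y, hy₀⟩ := KernelFork.IsLimit.lift' h.fIsKernel (ρ2 ≫ m - x1 ≫ ℓ) hmb2
  have hy : y ≫ a = ρ2 ≫ m - x1 ≫ ℓ := hy₀
  refine ⟨T2, ρ2 ≫ ρ1, epi_comp _ _, y, ?_⟩
  have hℓπ : ℓ ≫ π = 0 := cokernel.condition ℓ
  calc (ρ2 ≫ ρ1) ≫ x₂ = ρ2 ≫ (ρ1 ≫ x₂) := by rw [Category.assoc]
    _ = ρ2 ≫ m ≫ π := by rw [hm]
    _ = (ρ2 ≫ m - x1 ≫ ℓ) ≫ π + (x1 ≫ ℓ) ≫ π := by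
        rw [← Preadditive.add_comp, sub_add_cancel, Category.assoc]
    _ = (y ≫ a) ≫ π := by
        rw [Category.assoc x1 ℓ π, hℓπ, comp_zero, add_zero, hy]
    _ = y ≫ a ≫ π := by rw [Category.assoc]

/-- The cokernel of `(j, f) : A ⟶ I ⊞ B` sits in a short exact sequence
`0 ⟶ B ⟶ C ⟶ P ⟶ 0` (pushout of the sequence `A ⟶ I ⟶ P` along `f`). -/
lemma isShortExactSeq_pushout {A I P B : 𝒜} {j : A ⟶ I} {q : I ⟶ P}
    (w : j ≫ q = 0) (h : (ShortComplex.mk j q w).ShortExact) (f : A ⟶ B) :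
    IsShortExactSeq
      (biprod.inr ≫ cokernel.π (biprod.lift j f) : B ⟶ cokernel (biprod.lift j f))
      (cokernel.desc (biprod.lift j f) (biprod.fst ≫ q)
        (by rw [← Category.assoc, biprod.lift_fst, w])) := by
  haveI : Mono j := h.mono_f
  haveI : Epi q := h.epi_g
  set i : A ⟶ I ⊞ B := biprod.lift j f with hi
  haveI : Mono i := by
    have : Mono (i ≫ biprod.fst) := by rw [hi, biprod.lift_fst]; infer_instance
    exact mono_of_mono i biprod.fst
  obtain ⟨wi, hise⟩ := isShortExactSeq_cokernel i
  set π := cokernel.π i with hπ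
  set v : cokernel i ⟶ P := cokernel.desc i (biprod.fst ≫ q)
    (by rw [← Category.assoc, biprod.lift_fst, w]) with hv
  have hπv : π ≫ v = biprod.fst ≫ q := cokernel.π_desc _ _ _
  have hzero : (biprod.inr ≫ π) ≫ v = 0 := by
    rw [Category.assoc, hπv, ← Category.assoc, biprod.inr_fst, zero_comp]
  haveI : Mono (biprod.inr ≫ π : B ⟶ _) := by
    apply Preadditive.mono_of_cancel_zero
    intro T z hz
    rw [← Category.assoc] at hz
    obtain ⟨u, hu₀⟩ := KernelFork.IsLimit.lift' hise.fIsKernel (z ≫ biprod.inr) hz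
    have hu : u ≫ i = z ≫ biprod.inr := hu₀
    have hu0 : u = 0 := by
      have : u ≫ j = 0 := by
        rw [← biprod.lift_fst j f, ← hi, ← Category.assoc, hu, Category.assoc,
          biprod.inr_fst, comp_zero]
      exact zero_of_comp_mono j this
    rw [hu0, zero_comp] at hu
    exact zero_of_comp_mono biprod.inr hu.symm
  haveI : Epi v := by
    have : Epi (π ≫ v) := by rw [hπv]; exact epi_comp _ _
    exact epi_of_epi π v
  refine ⟨hzero, ?_⟩
  refine { exact := ?_, mono_f := ‹_›, epi_g := ‹_› }
  rw [ShortComplex.exact_iff_exact_up_to_refinements]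
  intro T x₂ hx₂
  dsimp at x₂ hx₂ ⊢
  obtain ⟨T1, ρ1, hρ1, m, hm⟩ := surjective_up_to_refinements_of_epi π x₂
  have hmq : (m ≫ biprod.fst) ≫ q = 0 := by
    rw [Category.assoc, ← hπv, ← Category.assoc, ← hm, Category.assoc, hx₂, comp_zero]
  obtain ⟨T2, ρ2, hρ2, x1, hx1⟩ := h.exact.exact_up_to_refinements (m ≫ biprod.fst) hmq
  dsimp at x1 hx1
  refine ⟨T2, ρ2 ≫ ρ1, epi_comp _ _, ρ2 ≫ m ≫ biprod.snd - x1 ≫ f, ?_⟩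
  have hiπ : i ≫ π = 0 := cokernel.condition i
  have hjinlπ : j ≫ biprod.inl ≫ π = -(f ≫ biprod.inr ≫ π) := by
    have h2 : (j ≫ biprod.inl + f ≫ biprod.inr) ≫ π = 0 := by
      rw [← biprod.lift_eq, ← hi, hiπ]
    rw [Preadditive.add_comp, Category.assoc, Category.assoc] at h2
    rw [eq_neg_iff_add_eq_zero]
    exact h2
  have htot : m ≫ π = m ≫ biprod.fst ≫ biprod.inl ≫ π + m ≫ biprod.snd ≫ biprod.inr ≫ π := by
    conv_lhs => rw [← Category.id_comp π, ← biprod.total]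
    rw [Preadditive.add_comp, Preadditive.comp_add]
    simp only [Category.assoc]
  have hx1' : ρ2 ≫ m ≫ biprod.fst = x1 ≫ j := hx1
  calc (ρ2 ≫ ρ1) ≫ x₂ = ρ2 ≫ (ρ1 ≫ x₂) := by rw [Category.assoc]
    _ = ρ2 ≫ m ≫ π := by rw [hm]
    _ = ρ2 ≫ (m ≫ biprod.fst ≫ biprod.inl ≫ π + m ≫ biprod.snd ≫ biprod.inr ≫ π) := by
        rw [← htot]
    _ = (ρ2 ≫ m ≫ biprod.fst) ≫ biprod.inl ≫ π
          + (ρ2 ≫ m ≫ biprod.snd) ≫ biprod.inr ≫ π := by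
        rw [Preadditive.comp_add]; simp only [Category.assoc]
    _ = (x1 ≫ j) ≫ biprod.inl ≫ π + (ρ2 ≫ m ≫ biprod.snd) ≫ biprod.inr ≫ π := by
        rw [hx1']
    _ = -((x1 ≫ f) ≫ biprod.inr ≫ π) + (ρ2 ≫ m ≫ biprod.snd) ≫ biprod.inr ≫ π := by
        rw [Category.assoc, hjinlπ]; simp only [Category.assoc, Preadditive.comp_neg]
    _ = (ρ2 ≫ m ≫ biprod.snd - x1 ≫ f) ≫ biprod.inr ≫ π := by
        rw [Preadditive.sub_comp]; abel

/-- `Ext¹(-, Y)`-vanishing is closed under extensions in the first variable. -/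
lemma ext1IsZero_of_extension {E : 𝒜 → Prop}
    (hEext : ∀ ⦃X Y Z : 𝒜⦄ (f : X ⟶ Y) (g : Y ⟶ Z),
      IsShortExactSeq f g → E X → E Z → E Y)
    {X1 X X2 Y : 𝒜} {s : X1 ⟶ X} {t : X ⟶ X2} (hst : IsShortExactSeq s t)
    (hEY : E Y) (hEX1 : E X1) (hEX2 : E X2)
    (h1 : Ext1IsZero E X1 Y) (h2 : Ext1IsZero E X2 Y) : Ext1IsZero E X Y := by
  intro M a b hEM hab
  obtain ⟨w, hse⟩ := hab
  obtain ⟨w2, hse2⟩ := hst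
  -- pull back along `s`
  have hN := isShortExactSeq_pullback w hse s
  have hEN : E (pullback b s) := hEext _ _ hN hEY hEX1
  obtain ⟨r1, hr1⟩ := h1 _ _ hEN hN
  obtain ⟨wN, hNse⟩ := hN
  -- the retraction gives a section `σ` of `pullback.snd`
  let spl := ShortComplex.Splitting.ofExactOfRetraction
    (ShortComplex.mk _ _ wN) hNse.exact r1 hr1 hNse.epi_g
  set σ : X1 ⟶ pullback b s := spl.s with hσ
  have hσsnd : σ ≫ pullback.snd b s = 𝟙 X1 := spl.s_g
  set ℓ : X1 ⟶ M := σ ≫ pullback.fst b s with hℓdef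
  have hℓ : ℓ ≫ b = s := by
    rw [hℓdef, Category.assoc, pullback.condition, ← Category.assoc, hσsnd, Category.id_comp]
  -- quotient by `ℓ`
  have hQ := isShortExactSeq_quotient w hse w2 hse2 ℓ hℓ
  have hEQ : E (cokernel ℓ) := hEext _ _ hQ hEY hEX2
  obtain ⟨r2, hr2⟩ := h2 _ _ hEQ hQ
  exact ⟨cokernel.π ℓ ≫ r2, by rw [← Category.assoc]; exact hr2⟩

/-- The left class of a cotorsion pair is closed under extensions. -/
lemma cc_extension_closed {E Cc Ip : 𝒜 → Prop} (hCP : IsCotorsionPair E Cc Ip)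
    (hEext : ∀ ⦃X Y Z : 𝒜⦄ (f : X ⟶ Y) (g : Y ⟶ Z),
      IsShortExactSeq f g → E X → E Z → E Y)
    {X1 X X2 : 𝒜} {s : X1 ⟶ X} {t : X ⟶ X2} (hst : IsShortExactSeq s t)
    (h1 : Cc X1) (h2 : Cc X2) : Cc X := by
  obtain ⟨hEX1, hext1⟩ := (hCP.left_eq X1).1 h1
  obtain ⟨hEX2, hext2⟩ := (hCP.left_eq X2).1 h2
  refine (hCP.left_eq X).2 ⟨hEext _ _ hst hEX1 hEX2, fun Y hY => ?_⟩
  have hEY : E Y := ((hCP.right_eq Y).1 hY).1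
  exact ext1IsZero_of_extension hEext hst hEY hEX1 hEX2 (hext1 hY) (hext2 hY)

end Auxiliary

/-- Let `(Cc, Ip)` be a complete cotorsion pair in `E`.
Every morphism `f : A ⟶ B` with `A, B ∈ Cc` factors as `f = i ≫ p` where `i`
is a cofibration and `p` is an acyclic fibration.  If moreover the pair is
hereditary, then `p` may be chosen with kernel in `Ip ∩ Cc`, i.e. `p` is an
acyclic fibration that is an admissible epimorphism between objects of `Cc`
with kernel in `Cc`. -/
theorem cofib_acyclicFib_factorization
    (E Cc Ip : 𝒜 → Prop) (hCP : IsCotorsionPair E Cc Ip)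
    (hcomplete : IsCompleteCP E Cc Ip)
    (hEiso : IsoClosed E) (hCiso : IsoClosed Cc) (hIiso : IsoClosed Ip)
    (hEext : ∀ ⦃X Y Z : 𝒜⦄ (f : X ⟶ Y) (g : Y ⟶ Z),
      IsShortExactSeq f g → E X → E Z → E Y)
    {A B : 𝒜} (f : A ⟶ B) (hA : Cc A) (hB : Cc B) :
    (∃ (M : 𝒜) (i : A ⟶ M) (p : M ⟶ B),
      IsCofib Cc i ∧ IsAcyclicFib E Ip p ∧ i ≫ p = f) ∧
    (IsHereditaryCP E Cc →
      ∃ (M : 𝒜) (i : A ⟶ M) (p : M ⟶ B),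
        IsCofib Cc i ∧ IsAcyclicFib E Ip p ∧
        (∃ (K : 𝒜) (k : K ⟶ M), Ip K ∧ Cc K ∧ IsShortExactSeq k p) ∧
        i ≫ p = f) := by
  have hEA : E A := ((hCP.left_eq A).1 hA).1
  have hEB : E B := ((hCP.left_eq B).1 hB).1
  obtain ⟨I, P, j, q, hI, hP, hjq⟩ := hcomplete.1 A hEA
  have hEI : E I := ((hCP.right_eq I).1 hI).1
  have hEP : E P := ((hCP.left_eq P).1 hP).1
  obtain ⟨w, hse⟩ := hjq
  haveI : Mono j := hse.mono_f
  have hip : biprod.lift j f ≫ (biprod.snd : I ⊞ B ⟶ B) = f := biprod.lift_snd j f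
  have hsplit : IsShortExactSeq (biprod.inl : I ⟶ I ⊞ B) (biprod.snd : I ⊞ B ⟶ B) :=
    isShortExactSeq_biprod I B
  have hEM : E (I ⊞ B) := hEext _ _ hsplit hEI hEB
  have haf : IsAcyclicFib E Ip (biprod.snd : I ⊞ B ⟶ B) :=
    ⟨hEM, hEB, I, biprod.inl, hI, hsplit⟩
  haveI : Mono (biprod.lift j f) := by
    have : Mono (biprod.lift j f ≫ biprod.fst) := by rw [biprod.lift_fst]; infer_instance
    exact mono_of_mono (biprod.lift j f) biprod.fst
  have hiC := isShortExactSeq_cokernel (biprod.lift j f)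
  have hpush := isShortExactSeq_pushout w hse f
  have hCC : Cc (cokernel (biprod.lift j f)) := cc_extension_closed hCP hEext hpush hB hP
  have hCM : Cc (I ⊞ B) := cc_extension_closed hCP hEext hiC hA hCC
  have hcof : IsCofib Cc (biprod.lift j f) :=
    ⟨hA, hCM, cokernel (biprod.lift j f), cokernel.π (biprod.lift j f), hCC, hiC⟩
  refine ⟨⟨I ⊞ B, biprod.lift j f, biprod.snd, hcof, haf, hip⟩, fun hher => ?_⟩
  have hCI : Cc I := hher _ _ hsplit hEI hCM hB
  exact ⟨I ⊞ B, biprod.lift j f, biprod.snd, hcof, haf,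
    ⟨I, biprod.inl, hI, hCI, hsplit⟩, hip⟩
end

section
/- A morphism between objects of 𝒞 is an acyclic cofibration if and only if it is both a cofibration and a weak equivalence. Moreover, every ℰ-admissible epimorphism between objects of 𝒞 whose kernel lies in 𝒵 is a weak equivalence. -/
open CategoryTheory CategoryTheory.Limits

universe v u

variable {𝒜 : Type u} [Category.{v} 𝒜] [Abelian 𝒜]

section AuxLemmas

open CategoryTheory.Preadditive

/-- A mono together with its cokernel projection forms a short exact sequence. -/
lemma ses_of_mono {X Y : 𝒜} (m : X ⟶ Y) [Mono m] : IsShortExactSeq m (cokernel.π m) :=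
  ⟨cokernel.condition m,
    ShortComplex.ShortExact.mk'
      (ShortComplex.exact_of_g_is_cokernel _ (cokernelIsCokernel m))
      ‹Mono m› inferInstance⟩

/-- Pulling back a short exact sequence along any morphism yields a short
exact sequence. -/
lemma pullback_ses {J M Y X : 𝒜} {a : J ⟶ M} {b : M ⟶ Y} (h : IsShortExactSeq a b)
    (u : X ⟶ Y) (j : J ⟶ pullback b u)
    (h1 : j ≫ pullback.fst b u = a) (h2 : j ≫ pullback.snd b u = 0) :
    IsShortExactSeq j (pullback.snd b u) := by
  obtain ⟨w, hse⟩ := h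
  haveI : Mono a := hse.mono_f
  haveI : Epi b := hse.epi_g
  haveI : Mono j := by
    have : Mono (j ≫ pullback.fst b u) := by rw [h1]; infer_instance
    exact mono_of_mono j (pullback.fst b u)
  have hker : IsLimit (KernelFork.ofι j h2) := by
    refine KernelFork.IsLimit.ofι' j h2 (fun {T} k hk => ?_)
    have hkb : (k ≫ pullback.fst b u) ≫ b = 0 := by
      rw [Category.assoc, pullback.condition, ← Category.assoc, hk, zero_comp]
    obtain ⟨l, hl⟩ := KernelFork.IsLimit.lift' hse.fIsKernel (k ≫ pullback.fst b u) hkb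
    dsimp at hl
    refine ⟨l, ?_⟩
    apply pullback.hom_ext
    · rw [Category.assoc, h1]; exact hl
    · rw [Category.assoc, h2, comp_zero, hk]
  exact ⟨h2, ShortComplex.ShortExact.mk'
    (ShortComplex.exact_of_f_is_kernel _ hker) inferInstance inferInstance⟩

/-- Pushing out a short exact sequence along any morphism yields a short
exact sequence (the pushout of the mono along the given leg). -/
lemma pushout_ses_inr {K X Y I : 𝒜} {k : K ⟶ X} {g : X ⟶ Y} (h : IsShortExactSeq k g)
    (a : K ⟶ I) (q : pushout k a ⟶ Y)
    (h1 : pushout.inl k a ≫ q = g) (h2 : pushout.inr k a ≫ q = 0) :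
    IsShortExactSeq (pushout.inr k a) q := by
  obtain ⟨w, hse⟩ := h
  haveI : Mono k := hse.mono_f
  haveI : Epi g := hse.epi_g
  haveI : Epi q := epi_of_epi_fac h1
  have hcoker : IsColimit (CokernelCofork.ofπ q h2) := by
    refine CokernelCofork.IsColimit.ofπ' q h2 (fun {T} t ht => ?_)
    have hkt : k ≫ pushout.inl k a ≫ t = 0 := by
      rw [← Category.assoc, pushout.condition, Category.assoc, ht, comp_zero]
    obtain ⟨d, hd⟩ := CokernelCofork.IsColimit.desc' hse.gIsCokernel
      (pushout.inl k a ≫ t) (by rw [← Category.assoc] at hkt ⊢; exact hkt)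
    dsimp at hd
    refine ⟨d, ?_⟩
    apply pushout.hom_ext
    · rw [← Category.assoc, h1]; exact hd
    · rw [← Category.assoc, h2, zero_comp, ht]
  exact ⟨h2, ShortComplex.ShortExact.mk'
    (ShortComplex.exact_of_g_is_cokernel _ hcoker) inferInstance inferInstance⟩

/-- The second short exact sequence attached to a pushout: the other leg
together with the projection onto the original cokernel. -/
lemma pushout_ses_inl {K I P X : 𝒜} {a : K ⟶ I} {b : I ⟶ P} (h : IsShortExactSeq a b)
    (k : K ⟶ X) (r : pushout k a ⟶ P)
    (h1 : pushout.inr k a ≫ r = b) (h2 : pushout.inl k a ≫ r = 0) :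
    IsShortExactSeq (pushout.inl k a) r := by
  obtain ⟨w, hse⟩ := h
  haveI : Mono a := hse.mono_f
  haveI : Epi b := hse.epi_g
  haveI : Epi r := epi_of_epi_fac h1
  have hcoker : IsColimit (CokernelCofork.ofπ r h2) := by
    refine CokernelCofork.IsColimit.ofπ' r h2 (fun {T} t ht => ?_)
    have hat : a ≫ pushout.inr k a ≫ t = 0 := by
      rw [← Category.assoc, ← pushout.condition, Category.assoc, ht, comp_zero]
    obtain ⟨d, hd⟩ := CokernelCofork.IsColimit.desc' hse.gIsCokernel
      (pushout.inr k a ≫ t) (by rw [← Category.assoc] at hat ⊢; exact hat)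
    dsimp at hd
    refine ⟨d, ?_⟩
    apply pushout.hom_ext
    · rw [← Category.assoc, h2, zero_comp, ht]
    · rw [← Category.assoc, h1]; exact hd
  exact ⟨h2, ShortComplex.ShortExact.mk'
    (ShortComplex.exact_of_g_is_cokernel _ hcoker) inferInstance inferInstance⟩

/-- The quotient chase: given a short exact sequence `J ⟶ M ⟶ Y` and a mono
`m : X ⟶ M` such that `m ≫ b = u` is also mono, the induced sequence
`J ⟶ coker m ⟶ coker u` is short exact. -/
lemma quot_ses {J M Y X : 𝒜} {a : J ⟶ M} {b : M ⟶ Y} (h : IsShortExactSeq a b)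
    {m : X ⟶ M} {u : X ⟶ Y} (hu : m ≫ b = u) (hm : Mono m) (hmu : Mono u) :
    IsShortExactSeq (a ≫ cokernel.π m)
      (cokernel.desc m (b ≫ cokernel.π u)
        (by rw [← Category.assoc, hu]; exact cokernel.condition u)) := by
  obtain ⟨w, hse⟩ := h
  haveI : Mono a := hse.mono_f
  haveI : Epi b := hse.epi_g
  haveI := hm
  haveI := hmu
  set π : M ⟶ cokernel m := cokernel.π m with hπ
  set c : Y ⟶ cokernel u := cokernel.π u with hc
  set wq : cokernel m ⟶ cokernel u :=
    cokernel.desc m (b ≫ c) (by rw [← Category.assoc, hu]; exact cokernel.condition u) with hwq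
  have hπwq : π ≫ wq = b ≫ c := cokernel.π_desc _ _ _
  obtain ⟨wm, hsem⟩ := ses_of_mono m
  obtain ⟨wu, hseu⟩ := ses_of_mono u
  have w0 : (a ≫ π) ≫ wq = 0 := by
    rw [Category.assoc, hπwq, ← Category.assoc, w, zero_comp]
  haveI : Mono (a ≫ π) := by
    apply mono_of_cancel_zero
    intro T t ht
    obtain ⟨T', ρ, hρ, x, hx⟩ := hsem.exact.exact_up_to_refinements (t ≫ a)
      (by rw [Category.assoc]; exact ht)
    dsimp at hx
    have hx0 : x ≫ u = 0 := by
      rw [← hu, ← Category.assoc, ← hx]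
      simp only [Category.assoc, w, comp_zero]
    have : x = 0 := zero_of_comp_mono u hx0
    rw [this, zero_comp] at hx
    have hta : t ≫ a = 0 := by
      haveI := hρ
      rw [← cancel_epi ρ, hx, comp_zero]
    exact zero_of_comp_mono a hta
  haveI : Epi wq := by
    haveI : Epi (b ≫ c) := epi_comp b c
    exact epi_of_epi_fac hπwq
  have hexact : (ShortComplex.mk (a ≫ π) wq w0).Exact := by
    rw [ShortComplex.exact_iff_exact_up_to_refinements]
    intro A x₂ hx₂
    dsimp at x₂ hx₂ ⊢
    obtain ⟨A₁, ρ₁, hρ₁, y, e₁⟩ := surjective_up_to_refinements_of_epi π x₂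
    have hybc : (y ≫ b) ≫ c = 0 := by
      have : y ≫ π ≫ wq = ρ₁ ≫ x₂ ≫ wq := by
        rw [← Category.assoc, ← e₁, Category.assoc]
      rw [Category.assoc, ← hπwq, this, hx₂, comp_zero]
    obtain ⟨A₂, ρ₂, hρ₂, x, e₂⟩ := hseu.exact.exact_up_to_refinements (y ≫ b) hybc
    dsimp at e₂
    have hsub : (ρ₂ ≫ y - x ≫ m) ≫ b = 0 := by
      rw [sub_comp, Category.assoc, Category.assoc, hu, e₂, sub_self]
    obtain ⟨A₃, ρ₃, hρ₃, j, e₃⟩ := hse.exact.exact_up_to_refinements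
      (ρ₂ ≫ y - x ≫ m) hsub
    dsimp at e₃
    haveI := hρ₁; haveI := hρ₂; haveI := hρ₃
    refine ⟨A₃, ρ₃ ≫ ρ₂ ≫ ρ₁, inferInstance, j, ?_⟩
    have hmπ : m ≫ π = 0 := cokernel.condition m
    calc (ρ₃ ≫ ρ₂ ≫ ρ₁) ≫ x₂ = ρ₃ ≫ ρ₂ ≫ (ρ₁ ≫ x₂) := by
          simp only [Category.assoc]
      _ = ρ₃ ≫ ρ₂ ≫ y ≫ π := by rw [e₁]
      _ = (ρ₃ ≫ (ρ₂ ≫ y - x ≫ m)) ≫ π + (ρ₃ ≫ x) ≫ (m ≫ π) := by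
          simp only [comp_sub, sub_comp, Category.assoc]
          abel
      _ = (j ≫ a) ≫ π := by rw [e₃, hmπ, comp_zero, add_zero]
      _ = j ≫ a ≫ π := by rw [Category.assoc]
  exact ⟨w0, ShortComplex.ShortExact.mk' hexact inferInstance inferInstance⟩

/-- The split short exact sequence `Y ⟶ Y ⊞ G ⟶ G`. -/
lemma biprod_inl_snd_ses (Y G : 𝒜) :
    IsShortExactSeq (biprod.inl : Y ⟶ Y ⊞ G) (biprod.snd : Y ⊞ G ⟶ G) := by
  refine ⟨by simp, ShortComplex.ShortExact.mk' ?_ inferInstance inferInstance⟩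
  exact (ShortComplex.Splitting.ofHasBinaryBiproduct Y G).exact

/-- The split short exact sequence `G ⟶ Y ⊞ G ⟶ Y`. -/
lemma biprod_inr_fst_ses (Y G : 𝒜) :
    IsShortExactSeq (biprod.inr : G ⟶ Y ⊞ G) (biprod.fst : Y ⊞ G ⟶ Y) := by
  refine ⟨by simp, ShortComplex.ShortExact.mk' ?_ inferInstance inferInstance⟩
  exact (ShortComplex.Splitting.mk (S := ShortComplex.mk
    (biprod.inr : G ⟶ Y ⊞ G) (biprod.fst : Y ⊞ G ⟶ Y) (by simp))
    (biprod.snd) (biprod.inl) (by simp) (by simp) (by ext <;> simp)).exact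

/-- Direct sum of a short exact sequence with the identity on `G`. -/
lemma biprod_ses {X Y W G : 𝒜} {f : X ⟶ Y} {g : Y ⟶ W} (h : IsShortExactSeq f g) :
    IsShortExactSeq (f ≫ biprod.inl : X ⟶ Y ⊞ G) (biprod.map g (𝟙 G)) := by
  obtain ⟨w, hse⟩ := h
  haveI : Mono f := hse.mono_f
  haveI : Epi g := hse.epi_g
  have w0 : (f ≫ biprod.inl) ≫ biprod.map g (𝟙 G) = 0 := by
    rw [Category.assoc, biprod.inl_map, ← Category.assoc, w, zero_comp]
  haveI : Mono (f ≫ (biprod.inl : Y ⟶ Y ⊞ G)) := mono_comp _ _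
  haveI : Epi (biprod.map g (𝟙 G)) := by
    apply epi_of_cancel_zero
    intro T t ht
    have h₁ : g ≫ (biprod.inl : W ⟶ W ⊞ G) ≫ t = 0 := by
      have := biprod.inl ≫= ht; simpa using this
    have h₂ : (biprod.inr : G ⟶ W ⊞ G) ≫ t = 0 := by
      have := biprod.inr ≫= ht; simpa using this
    have h₁' : (biprod.inl : W ⟶ W ⊞ G) ≫ t = 0 := by
      rwa [← cancel_epi g, comp_zero]
    apply biprod.hom_ext' <;> simp [h₁', h₂]
  have hker : IsLimit (KernelFork.ofι (f ≫ biprod.inl) w0) := by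
    refine KernelFork.IsLimit.ofι' _ w0 (fun {T} k hk => ?_)
    have hk1 : (k ≫ biprod.fst) ≫ g = 0 := by
      have := hk =≫ biprod.fst
      simpa using this
    have hk2 : k ≫ biprod.snd = 0 := by
      have := hk =≫ biprod.snd
      simpa using this
    obtain ⟨l, hl⟩ := KernelFork.IsLimit.lift' hse.fIsKernel (k ≫ biprod.fst) hk1
    dsimp at hl
    refine ⟨l, ?_⟩
    ext
    · simpa using hl
    · simpa using hk2.symm
  exact ⟨w0, ShortComplex.ShortExact.mk'
    (ShortComplex.exact_of_f_is_kernel _ hker) inferInstance inferInstance⟩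

/-- The canonical isomorphism between the third term of a short exact
sequence and the categorical cokernel of the first map. -/
noncomputable def sesCokerIso {X Y Z : 𝒜} {f : X ⟶ Y} {g : Y ⟶ Z} (w : f ≫ g = 0)
    (hse : (ShortComplex.mk f g w).ShortExact) : Z ≅ cokernel f :=
  IsColimit.coconePointUniqueUpToIso hse.gIsCokernel (colimit.isColimit (parallelPair f 0))

end AuxLemmas

namespace CotorsionSetup

variable {E Cc Ip Zc : 𝒜 → Prop}

lemma eOfC (S : CotorsionSetup E Cc Ip Zc) {X : 𝒜} (h : Cc X) : E X :=
  ((S.cp.left_eq X).1 h).1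

lemma eOfI (S : CotorsionSetup E Cc Ip Zc) {X : 𝒜} (h : Ip X) : E X :=
  ((S.cp.right_eq X).1 h).1

lemma ext1OfC (S : CotorsionSetup E Cc Ip Zc) {X J : 𝒜} (hX : Cc X) (hJ : Ip J) :
    Ext1IsZero E X J :=
  ((S.cp.left_eq X).1 hX).2 hJ

/-- The left class of the cotorsion pair is closed under extensions. -/
lemma ccExtClosed (S : CotorsionSetup E Cc Ip Zc) {X Y Z : 𝒜} {u : X ⟶ Y} {v : Y ⟶ Z}
    (h : IsShortExactSeq u v) (hX : Cc X) (hZ : Cc Z) : Cc Y := by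
  obtain ⟨wuv, hsev⟩ := h
  haveI : Mono u := hsev.mono_f
  refine (S.cp.left_eq Y).2 ⟨S.extClosedE u v ⟨wuv, hsev⟩ (S.eOfC hX) (S.eOfC hZ), ?_⟩
  intro J hJ M a b hM hab
  obtain ⟨w, hse⟩ := hab
  haveI : Mono a := hse.mono_f
  haveI : Epi b := hse.epi_g
  have hj0 : a ≫ b = 0 ≫ u := by rw [w, zero_comp]
  set j : J ⟶ pullback b u := pullback.lift a 0 hj0 with hj
  have hses1 : IsShortExactSeq j (pullback.snd b u) :=
    pullback_ses ⟨w, hse⟩ u j (pullback.lift_fst _ _ _) (pullback.lift_snd _ _ _)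
  have hEN : E (pullback b u) := S.extClosedE j _ hses1 (S.eOfI hJ) (S.eOfC hX)
  obtain ⟨r₁, hr₁⟩ := S.ext1OfC hX hJ j (pullback.snd b u) hEN hses1
  obtain ⟨w1, hse1⟩ := hses1
  have sp := ShortComplex.Splitting.ofExactOfRetraction _ hse1.exact r₁ hr₁ hse1.epi_g
  set m : X ⟶ M := sp.s ≫ pullback.fst b u with hm
  have hmu : m ≫ b = u := by
    rw [hm, Category.assoc, pullback.condition, ← Category.assoc]
    have : sp.s ≫ pullback.snd b u = 𝟙 X := sp.s_g
    rw [this, Category.id_comp]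
  haveI hMm : Mono m := by
    have : Mono (m ≫ b) := by rw [hmu]; infer_instance
    exact mono_of_mono m b
  have hq := quot_ses ⟨w, hse⟩ hmu hMm ‹Mono u›
  have eZiso : Z ≅ cokernel u := sesCokerIso wuv hsev
  have hCcoku : Cc (cokernel u) := S.isoC eZiso hZ
  have hEcokm : E (cokernel m) :=
    S.extClosedE _ _ hq (S.eOfI hJ) (S.isoE eZiso (S.eOfC hZ))
  obtain ⟨r₂, hr₂⟩ := S.ext1OfC hCcoku hJ _ _ hEcokm hq
  exact ⟨cokernel.π m ≫ r₂, by rw [← Category.assoc]; exact hr₂⟩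

/-- There is an object lying in both classes of the cotorsion pair. -/
lemma existsCcIp (S : CotorsionSetup E Cc Ip Zc) {A : 𝒜} (hA : Cc A) :
    ∃ G, Cc G ∧ Ip G := by
  obtain ⟨I, P, α, β, hI, hP, hse⟩ := S.complete.1 A (S.eOfC hA)
  exact ⟨I, S.ccExtClosed hse hA hP, hI⟩

/-- An acyclic cofibration is a weak equivalence. -/
lemma acyclicCofibWeakEquiv (S : CotorsionSetup E Cc Ip Zc) {X Y : 𝒜} {f : X ⟶ Y}
    (h : IsAcyclicCofib Cc Zc f) : IsWeakEquiv E Cc Ip Zc f := by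
  obtain ⟨hX, hY, W, gW, hWc, hWz, hseW⟩ := h
  obtain ⟨G, hGc, hGI⟩ := S.existsCcIp hX
  have hsesYG := biprod_inl_snd_ses (𝒜 := 𝒜) Y G
  have hsesWG := biprod_inl_snd_ses (𝒜 := 𝒜) W G
  have hCWG : Cc (W ⊞ G) := S.ccExtClosed hsesWG hWc hGc
  refine ⟨hX, hY, Y ⊞ G, f ≫ biprod.inl, biprod.fst, ?_, ?_, by simp⟩
  · exact ⟨hX, S.ccExtClosed hsesYG hY hGc, W ⊞ G, biprod.map gW (𝟙 G), hCWG,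
      S.zcExtClosed _ _ hsesWG hWc hCWG hGc hWz (S.iSubZ hGI), biprod_ses hseW⟩
  · exact ⟨S.extClosedE _ _ hsesYG (S.eOfC hY) (S.eOfC hGc), S.eOfC hY,
      G, biprod.inr, hGI, biprod_inr_fst_ses Y G⟩

/-- A cofibration which is a weak equivalence is an acyclic cofibration. -/
lemma cofibWeakEquivAcyclicCofib (S : CotorsionSetup E Cc Ip Zc) {X Y : 𝒜} {f : X ⟶ Y}
    (hc : IsCofib Cc f) (hw : IsWeakEquiv E Cc Ip Zc f) : IsAcyclicCofib Cc Zc f := by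
  obtain ⟨hX, hY, W, gW, hWc, hseW⟩ := hc
  obtain ⟨-, -, M, i, p, ⟨-, hMc, V, gV, hVc, hVz, hseV⟩,
    ⟨hEM, hEY, K, κ, hKI, hseK⟩, hip⟩ := hw
  obtain ⟨wV, hseV'⟩ := hseV
  obtain ⟨wW, hseW'⟩ := hseW
  haveI : Mono i := hseV'.mono_f
  haveI : Mono f := hseW'.mono_f
  have hq := quot_ses hseK hip ‹Mono i› ‹Mono f›
  have isoV : V ≅ cokernel i := sesCokerIso wV hseV'
  have isoW : W ≅ cokernel f := sesCokerIso wW hseW'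
  have hCki : Cc (cokernel i) := S.isoC isoV hVc
  have hCkf : Cc (cokernel f) := S.isoC isoW hWc
  have hCK : Cc K := S.hereditary _ _ hq (S.eOfI hKI) hCki hCkf
  have hZkf : Zc (cokernel f) :=
    S.zcCokerClosed _ _ hq hCK hCki hCkf (S.iSubZ hKI) (S.isoZ isoV hVz)
  exact ⟨hX, hY, W, gW, hWc, S.isoZ isoW.symm hZkf, ⟨wW, hseW'⟩⟩

/-- An admissible epi between objects of `Cc` with kernel in `Zc` is a weak
equivalence. -/
lemma epiZcKernelWeakEquiv (S : CotorsionSetup E Cc Ip Zc) {X Y : 𝒜} (g : X ⟶ Y)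
    (hX : Cc X) (hY : Cc Y)
    (hk : ∃ (K : 𝒜) (k : K ⟶ X), Zc K ∧ IsShortExactSeq k g) :
    IsWeakEquiv E Cc Ip Zc g := by
  obtain ⟨K, k, hZK, hse⟩ := hk
  have hEK : E K := S.zSubE hZK
  have hCK : Cc K := S.hereditary k g hse hEK hX hY
  obtain ⟨I, P, α, β, hII, hPc, hseI⟩ := S.complete.1 K hEK
  have hCI : Cc I := S.ccExtClosed hseI hCK hPc
  have hZP : Zc P := S.zcCokerClosed α β hseI hCK hCI hPc hZK (S.iSubZ hII)
  obtain ⟨wk, hsek⟩ := hse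
  obtain ⟨wα, hseα⟩ := hseI
  set p : pushout k α ⟶ Y := pushout.desc g 0 (by rw [wk, comp_zero]) with hp
  set r : pushout k α ⟶ P := pushout.desc 0 β (by rw [comp_zero, wα]) with hr
  have hsesIr : IsShortExactSeq (pushout.inr k α) p :=
    pushout_ses_inr ⟨wk, hsek⟩ α p (pushout.inl_desc _ _ _) (pushout.inr_desc _ _ _)
  have hsesXl : IsShortExactSeq (pushout.inl k α) r :=
    pushout_ses_inl ⟨wα, hseα⟩ k r (pushout.inr_desc _ _ _) (pushout.inl_desc _ _ _)
  have hEM : E (pushout k α) := S.extClosedE _ _ hsesIr (S.eOfI hII) (S.eOfC hY)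
  have hCM : Cc (pushout k α) := S.ccExtClosed hsesXl hX hPc
  exact ⟨hX, hY, pushout k α, pushout.inl k α, p,
    ⟨hX, hCM, P, r, hPc, hZP, hsesXl⟩,
    ⟨hEM, S.eOfC hY, I, pushout.inr k α, hII, hsesIr⟩,
    pushout.inl_desc _ _ _⟩

end CotorsionSetup

/-- In the standing setup, a morphism between objects of
`Cc` is an acyclic cofibration if and only if it is both a cofibration and a
weak equivalence.  Moreover, every `E`-admissible epimorphism between objects
of `Cc` whose kernel lies in `Zc` is a weak equivalence. -/
theorem acyclicCofib_iff_cofib_and_weakEquiv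
    (E Cc Ip Zc : 𝒜 → Prop) (S : CotorsionSetup E Cc Ip Zc) :
    (∀ ⦃X Y : 𝒜⦄ (f : X ⟶ Y), Cc X → Cc Y →
      (IsAcyclicCofib Cc Zc f ↔ (IsCofib Cc f ∧ IsWeakEquiv E Cc Ip Zc f))) ∧
    (∀ ⦃X Y : 𝒜⦄ (g : X ⟶ Y), Cc X → Cc Y →
      (∃ (K : 𝒜) (k : K ⟶ X), Zc K ∧ IsShortExactSeq k g) →
      IsWeakEquiv E Cc Ip Zc g) := by
  constructor
  · intro X Y f hX hY
    constructor
    · intro h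
      obtain ⟨_, _, W, gW, hWc, hWz, hseW⟩ := h
      exact ⟨⟨hX, hY, W, gW, hWc, hseW⟩,
        S.acyclicCofibWeakEquiv ⟨hX, hY, W, gW, hWc, hWz, hseW⟩⟩
    · rintro ⟨hc, hw⟩
      exact S.cofibWeakEquivAcyclicCofib hc hw
  · intro X Y g hX hY hk
    exact S.epiZcKernelWeakEquiv g hX hY hk
end

section
/- The composite of two weak equivalences (between objects of 𝒞) is a weak equivalence. -/
open CategoryTheory CategoryTheory.Limits

universe v u

variable {𝒜 : Type u} [Category.{v} 𝒜] [Abelian 𝒜]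

section WEHelpers

attribute [local instance] CategoryTheory.Abelian.Pseudoelement.objectToSort
  CategoryTheory.Abelian.Pseudoelement.homToFun

open CategoryTheory.Abelian.Pseudoelement

lemma IsShortExactSeq.zero_comp {X Y Z : 𝒜} {f : X ⟶ Y} {g : Y ⟶ Z}
    (h : IsShortExactSeq f g) : f ≫ g = 0 := by
  obtain ⟨w, _⟩ := h; exact w

lemma IsShortExactSeq.mono' {X Y Z : 𝒜} {f : X ⟶ Y} {g : Y ⟶ Z}
    (h : IsShortExactSeq f g) : Mono f := by
  obtain ⟨w, h⟩ := h; exact h.mono_f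

lemma IsShortExactSeq.epi' {X Y Z : 𝒜} {f : X ⟶ Y} {g : Y ⟶ Z}
    (h : IsShortExactSeq f g) : Epi g := by
  obtain ⟨w, h⟩ := h; exact h.epi_g

lemma IsShortExactSeq.lift {X Y Z W : 𝒜} {f : X ⟶ Y} {g : Y ⟶ Z} (h : IsShortExactSeq f g)
    (a : W ⟶ Y) (ha : a ≫ g = 0) : ∃ b : W ⟶ X, b ≫ f = a := by
  obtain ⟨w, h⟩ := h
  obtain ⟨b, hb⟩ := KernelFork.IsLimit.lift' h.fIsKernel a ha
  exact ⟨b, by simpa using hb⟩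

lemma IsShortExactSeq.desc {X Y Z W : 𝒜} {f : X ⟶ Y} {g : Y ⟶ Z} (h : IsShortExactSeq f g)
    (a : Y ⟶ W) (ha : f ≫ a = 0) : ∃ b : Z ⟶ W, g ≫ b = a := by
  obtain ⟨w, h⟩ := h
  obtain ⟨b, hb⟩ := CokernelCofork.IsColimit.desc' h.gIsCokernel a ha
  exact ⟨b, by simpa using hb⟩

lemma IsShortExactSeq.pexact {X Y Z : 𝒜} {f : X ⟶ Y} {g : Y ⟶ Z} (h : IsShortExactSeq f g) :
    ∀ b : Y, g b = 0 → ∃ a : X, f a = b := by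
  obtain ⟨w, h⟩ := h
  exact fun b hb => pseudo_exact_of_exact h.exact b hb

lemma ses_mk_pseudo {X Y Z : 𝒜} {f : X ⟶ Y} {g : Y ⟶ Z} (w : f ≫ g = 0)
    (hm : Mono f) (he : Epi g)
    (hex : ∀ b : Y, g b = 0 → ∃ a : X, f a = b) : IsShortExactSeq f g :=
  ⟨w, ShortComplex.ShortExact.mk' (exact_of_pseudo_exact (ShortComplex.mk f g w) hex) hm he⟩

lemma ses_mk_kernel {X Y Z : 𝒜} {f : X ⟶ Y} {g : Y ⟶ Z} (w : f ≫ g = 0)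
    (hm : Mono f) (he : Epi g)
    (hl : IsLimit (KernelFork.ofι f w)) : IsShortExactSeq f g :=
  ⟨w, ShortComplex.ShortExact.mk' (ShortComplex.exact_of_f_is_kernel _ hl) hm he⟩

lemma ses_mk_cokernel {X Y Z : 𝒜} {f : X ⟶ Y} {g : Y ⟶ Z} (w : f ≫ g = 0)
    (hm : Mono f) (he : Epi g)
    (hl : IsColimit (CokernelCofork.ofπ g w)) : IsShortExactSeq f g :=
  ⟨w, ShortComplex.ShortExact.mk' (ShortComplex.exact_of_g_is_cokernel _ hl) hm he⟩

lemma ses_section_of_retraction {X Y Z : 𝒜} {f : X ⟶ Y} {g : Y ⟶ Z} (h : IsShortExactSeq f g)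
    (r : Y ⟶ X) (hr : f ≫ r = 𝟙 X) : ∃ s : Z ⟶ Y, s ≫ g = 𝟙 Z := by
  obtain ⟨s, hs⟩ := h.desc (𝟙 Y - r ≫ f)
    (by rw [Preadditive.comp_sub, Category.comp_id, ← Category.assoc, hr, Category.id_comp,
      sub_self])
  haveI := h.epi'
  refine ⟨s, ?_⟩
  rw [← cancel_epi g, ← Category.assoc, hs, Preadditive.sub_comp, Category.id_comp,
    Category.assoc, h.zero_comp, comp_zero, sub_zero, Category.comp_id]

lemma ses_retraction_of_section {X Y Z : 𝒜} {f : X ⟶ Y} {g : Y ⟶ Z} (h : IsShortExactSeq f g)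
    (s : Z ⟶ Y) (hs : s ≫ g = 𝟙 Z) : ∃ r : Y ⟶ X, f ≫ r = 𝟙 X := by
  obtain ⟨r, hr⟩ := h.lift (𝟙 Y - g ≫ s)
    (by rw [Preadditive.sub_comp, Category.id_comp, Category.assoc, hs, Category.comp_id,
      sub_self])
  haveI := h.mono'
  refine ⟨r, ?_⟩
  rw [← cancel_mono f, Category.assoc, hr, Preadditive.comp_sub, Category.comp_id,
    ← Category.assoc, h.zero_comp, zero_comp, sub_zero, Category.id_comp]


lemma ses_pullback {K M B T : 𝒜} {u : K ⟶ M} {p : M ⟶ B} (h : IsShortExactSeq u p) (t : T ⟶ B) :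
    ∃ k' : K ⟶ pullback p t, k' ≫ pullback.fst p t = u ∧ k' ≫ pullback.snd p t = 0 ∧
      IsShortExactSeq k' (pullback.snd p t) := by
  haveI := h.epi'
  haveI := h.mono'
  have w0 : u ≫ p = (0 : K ⟶ T) ≫ t := by simp [h.zero_comp]
  refine ⟨pullback.lift u 0 w0, pullback.lift_fst _ _ _, pullback.lift_snd _ _ _, ?_⟩
  have h1 : pullback.lift u 0 w0 ≫ pullback.fst p t = u := pullback.lift_fst _ _ _
  have h2 : pullback.lift u 0 w0 ≫ pullback.snd p t = 0 := pullback.lift_snd _ _ _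
  haveI : Mono (pullback.lift u 0 w0) := mono_of_mono_fac h1
  refine ses_mk_kernel h2 inferInstance inferInstance ?_
  refine KernelFork.IsLimit.ofι' _ h2 (fun {A} a ha => ?_)
  have hap : (a ≫ pullback.fst p t) ≫ p = 0 := by
    rw [Category.assoc, pullback.condition, ← Category.assoc, ha, zero_comp]
  refine ⟨(h.lift _ hap).choose, ?_⟩
  apply pullback.hom_ext
  · rw [Category.assoc, h1, (h.lift _ hap).choose_spec]
  · rw [Category.assoc, h2, comp_zero, ha]

lemma ses_pushout {B M X' T : 𝒜} {u : B ⟶ M} {v : M ⟶ X'} (h : IsShortExactSeq u v) (t : B ⟶ T) :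
    ∃ d : pushout u t ⟶ X', pushout.inl u t ≫ d = v ∧ pushout.inr u t ≫ d = 0 ∧
      IsShortExactSeq (pushout.inr u t) d := by
  haveI := h.mono'
  haveI := h.epi'
  have w0 : u ≫ v = t ≫ (0 : T ⟶ X') := by simp [h.zero_comp]
  refine ⟨pushout.desc v 0 w0, pushout.inl_desc _ _ _, pushout.inr_desc _ _ _, ?_⟩
  have h1 : pushout.inl u t ≫ pushout.desc v 0 w0 = v := pushout.inl_desc _ _ _
  have h2 : pushout.inr u t ≫ pushout.desc v 0 w0 = 0 := pushout.inr_desc _ _ _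
  haveI : Epi (pushout.desc v 0 w0) := epi_of_epi_fac h1
  refine ses_mk_cokernel h2 inferInstance inferInstance ?_
  refine CokernelCofork.IsColimit.ofπ' _ h2 (fun {A} e he => ?_)
  have hue : u ≫ (pushout.inl u t ≫ e) = 0 := by
    rw [← Category.assoc, pushout.condition, Category.assoc, he, comp_zero]
  refine ⟨(h.desc _ hue).choose, ?_⟩
  apply pushout.hom_ext
  · rw [← Category.assoc, h1, (h.desc _ hue).choose_spec]
  · rw [← Category.assoc, h2, zero_comp, he]

lemma ses_pullback_fst {P N Y0 W : 𝒜} {π : P ⟶ N} {i : Y0 ⟶ N} {c : N ⟶ W}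
    (hπ : Epi π) (h : IsShortExactSeq i c) :
    IsShortExactSeq (pullback.fst π i) (π ≫ c) := by
  haveI := h.mono'
  haveI := h.epi'
  haveI := hπ
  haveI : Epi (π ≫ c) := epi_comp _ _
  have w0 : pullback.fst π i ≫ π ≫ c = 0 := by
    rw [← Category.assoc, pullback.condition, Category.assoc, h.zero_comp, comp_zero]
  haveI : Mono (pullback.fst π i) := inferInstance
  refine ses_mk_kernel w0 inferInstance inferInstance ?_
  refine KernelFork.IsLimit.ofι' _ w0 (fun {A} a ha => ?_)
  have hac : (a ≫ π) ≫ c = 0 := by rw [Category.assoc]; exact ha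
  refine ⟨pullback.lift a (h.lift _ hac).choose (h.lift _ hac).choose_spec.symm, ?_⟩
  exact pullback.lift_fst _ _ _

lemma ses_comp_of_square {K M Y0 P N W : 𝒜} {k : K ⟶ M} {p : M ⟶ Y0} {j : M ⟶ P} {d : P ⟶ W}
    {i : Y0 ⟶ N} {c : N ⟶ W} {q : P ⟶ N}
    (h1 : IsShortExactSeq k p) (h2 : IsShortExactSeq j d) (h3 : IsShortExactSeq i c)
    (hq1 : j ≫ q = p ≫ i) (hq2 : q ≫ c = d) : IsShortExactSeq (k ≫ j) q := by
  haveI := h1.mono'; haveI := h2.mono'; haveI := h3.mono'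
  haveI := h1.epi'; haveI := h2.epi'; haveI := h3.epi'
  haveI : Mono (k ≫ j) := mono_comp _ _
  have hepi : Epi q := by
    refine ⟨fun {A} e₁ e₂ hee => ?_⟩
    have h0 : q ≫ (e₁ - e₂) = 0 := by rw [Preadditive.comp_sub, hee, sub_self]
    have hie : i ≫ (e₁ - e₂) = 0 := by
      rw [← cancel_epi p, comp_zero, ← Category.assoc, ← hq1, Category.assoc, h0, comp_zero]
    obtain ⟨b, hb⟩ := h3.desc (e₁ - e₂) hie
    have hd : d ≫ b = 0 := by
      rw [← hq2, Category.assoc, hb, h0]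
    have hb0 : b = 0 := zero_of_epi_comp d hd
    rw [hb0, comp_zero] at hb
    exact sub_eq_zero.1 hb.symm
  have w0 : (k ≫ j) ≫ q = 0 := by
    rw [Category.assoc, hq1, ← Category.assoc, h1.zero_comp, zero_comp]
  refine ses_mk_kernel w0 inferInstance hepi ?_
  refine KernelFork.IsLimit.ofι' _ w0 (fun {A} a ha => ?_)
  have had : a ≫ d = 0 := by rw [← hq2, ← Category.assoc, ha, zero_comp]
  have ha' : (h2.lift a had).choose ≫ j = a := (h2.lift a had).choose_spec
  have hap : (h2.lift a had).choose ≫ p = 0 := by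
    rw [← cancel_mono i, Category.assoc, ← hq1, ← Category.assoc, ha', ha, zero_comp]
  refine ⟨(h1.lift _ hap).choose, ?_⟩
  rw [← Category.assoc, (h1.lift _ hap).choose_spec, ha']


lemma ses_quotient {A B C' Y0 M : 𝒜} {a : A ⟶ B} {cB : B ⟶ C'} {f : Y0 ⟶ M} {g : M ⟶ B}
    (hab : IsShortExactSeq a cB) (hfg : IsShortExactSeq f g) (s : A ⟶ M) (hs : s ≫ g = a) :
    ∃ (M'' : 𝒜) (e : M ⟶ M'') (r : M'' ⟶ C'), IsShortExactSeq s e ∧ e ≫ r = g ≫ cB ∧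
      IsShortExactSeq (f ≫ e) r := by
  haveI := hab.mono'; haveI := hab.epi'; haveI := hfg.mono'; haveI := hfg.epi'
  haveI hsm : Mono s := mono_of_mono_fac hs
  have hse : IsShortExactSeq s (cokernel.π s) :=
    ses_mk_cokernel (cokernel.condition s) inferInstance inferInstance (cokernelIsCokernel s)
  have hcond : s ≫ g ≫ cB = 0 := by rw [← Category.assoc, hs, hab.zero_comp]
  set r : cokernel s ⟶ C' := cokernel.desc s (g ≫ cB) hcond with hrdef
  have her : cokernel.π s ≫ r = g ≫ cB := cokernel.π_desc _ _ _
  have hmono : Mono (f ≫ cokernel.π s) := by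
    refine ⟨fun {T} u₁ u₂ huu => ?_⟩
    have h0 : ((u₁ - u₂) ≫ f) ≫ cokernel.π s = 0 := by
      rw [Preadditive.sub_comp, Preadditive.sub_comp, Category.assoc, Category.assoc, huu,
        sub_self]
    obtain ⟨w', hw'⟩ := hse.lift _ h0
    have hwa : w' ≫ a = 0 := by
      rw [← hs, ← Category.assoc, hw', Category.assoc, hfg.zero_comp, comp_zero]
    have hw0 : w' = 0 := zero_of_comp_mono a hwa
    rw [hw0, zero_comp] at hw'
    have : (u₁ - u₂) ≫ f = 0 := hw'.symm
    have := sub_eq_zero.1 ((cancel_mono f).1 (by rw [this, zero_comp]))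
    exact this
  haveI : Epi (g ≫ cB) := epi_comp _ _
  have hrepi : Epi r := epi_of_epi_fac her
  have w0 : (f ≫ cokernel.π s) ≫ r = 0 := by
    rw [Category.assoc, her, ← Category.assoc, hfg.zero_comp, zero_comp]
  refine ⟨cokernel s, cokernel.π s, r, hse, her, ses_mk_pseudo w0 hmono hrepi ?_⟩
  intro x hx
  obtain ⟨m, hm⟩ := pseudo_surjective_of_epi (cokernel.π s) x
  have h1 : cB (g m) = 0 := by
    rw [← Abelian.Pseudoelement.comp_apply, ← her, Abelian.Pseudoelement.comp_apply, hm, hx]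
  obtain ⟨α, hα⟩ := hab.pexact (g m) h1
  have h2 : g m = g (s α) := by rw [← Abelian.Pseudoelement.comp_apply, hs, hα]
  obtain ⟨z, hz0, hz⟩ := sub_of_eq_image g m (s α) h2
  have hz1 : (cokernel.π s) z = (cokernel.π s) m := by
    refine hz _ (cokernel.π s) ?_
    rw [← Abelian.Pseudoelement.comp_apply, cokernel.condition, Abelian.Pseudoelement.zero_apply]
  obtain ⟨y, hy⟩ := hfg.pexact z hz0
  refine ⟨y, ?_⟩
  rw [Abelian.Pseudoelement.comp_apply, hy, hz1, hm]

lemma ses_sub {A B C' M X0 M₀ : 𝒜} {f : A ⟶ B} {g : B ⟶ C'} {u : B ⟶ M} {v : M ⟶ X0}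
    {φ : M ⟶ C'} {m : M₀ ⟶ M} {k : A ⟶ M₀}
    (hfg : IsShortExactSeq f g) (huv : IsShortExactSeq u v) (hmφ : IsShortExactSeq m φ)
    (hφ : u ≫ φ = g) (hk : k ≫ m = f ≫ u) : IsShortExactSeq k (m ≫ v) := by
  haveI := hfg.mono'; haveI := hfg.epi'; haveI := huv.mono'; haveI := huv.epi'
  haveI := hmφ.mono'; haveI := hmφ.epi'
  haveI : Mono (f ≫ u) := mono_comp _ _
  haveI hkm : Mono k := mono_of_mono_fac hk
  have w0 : k ≫ m ≫ v = 0 := by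
    rw [← Category.assoc, hk, Category.assoc, huv.zero_comp, comp_zero]
  have hepi : Epi (m ≫ v) := by
    apply epi_of_pseudo_surjective
    intro x
    obtain ⟨y, hy⟩ := pseudo_surjective_of_epi v x
    obtain ⟨b, hb⟩ := pseudo_surjective_of_epi g (φ y)
    have h2 : φ y = φ (u b) := by rw [← Abelian.Pseudoelement.comp_apply, hφ, hb]
    obtain ⟨z, hz0, hz⟩ := sub_of_eq_image φ y (u b) h2
    have hz1 : v z = v y := by
      refine hz _ v ?_
      rw [← Abelian.Pseudoelement.comp_apply, huv.zero_comp, Abelian.Pseudoelement.zero_apply]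
    obtain ⟨w, hw⟩ := hmφ.pexact z hz0
    refine ⟨w, ?_⟩
    rw [Abelian.Pseudoelement.comp_apply, hw, hz1, hy]
  refine ses_mk_pseudo w0 hkm hepi ?_
  intro z₀ hz₀
  have h1 : v (m z₀) = 0 := by rw [← Abelian.Pseudoelement.comp_apply]; exact hz₀
  obtain ⟨b, hb⟩ := huv.pexact (m z₀) h1
  have h2 : g b = 0 := by
    rw [← hφ, Abelian.Pseudoelement.comp_apply, hb, ← Abelian.Pseudoelement.comp_apply, hmφ.zero_comp,
      Abelian.Pseudoelement.zero_apply]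
  obtain ⟨α, hα⟩ := hfg.pexact b h2
  refine ⟨α, pseudo_injective_of_mono m ?_⟩
  rw [← Abelian.Pseudoelement.comp_apply, hk, Abelian.Pseudoelement.comp_apply, hα, hb]

lemma noether_mono {X0 Y0 N W₁ W₂ : 𝒜} {m₁ : X0 ⟶ Y0} {e₁ : Y0 ⟶ W₁} {m₂ : Y0 ⟶ N} {e₂ : N ⟶ W₂}
    (h1 : IsShortExactSeq m₁ e₁) (h2 : IsShortExactSeq m₂ e₂) :
    ∃ (W : 𝒜) (e : N ⟶ W) (w₁ : W₁ ⟶ W) (r : W ⟶ W₂),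
      IsShortExactSeq (m₁ ≫ m₂) e ∧ e₁ ≫ w₁ = m₂ ≫ e ∧ IsShortExactSeq w₁ r := by
  haveI := h1.mono'; haveI := h1.epi'; haveI := h2.mono'; haveI := h2.epi'
  haveI : Mono (m₁ ≫ m₂) := mono_comp _ _
  have hse : IsShortExactSeq (m₁ ≫ m₂) (cokernel.π (m₁ ≫ m₂)) :=
    ses_mk_cokernel (cokernel.condition _) inferInstance inferInstance (cokernelIsCokernel _)
  have hc1 : m₁ ≫ m₂ ≫ cokernel.π (m₁ ≫ m₂) = 0 := by
    rw [← Category.assoc]; exact cokernel.condition _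
  obtain ⟨w₁, hw₁⟩ := h1.desc (m₂ ≫ cokernel.π (m₁ ≫ m₂)) hc1
  have hc2 : (m₁ ≫ m₂) ≫ e₂ = 0 := by rw [Category.assoc, h2.zero_comp, comp_zero]
  set r : cokernel (m₁ ≫ m₂) ⟶ W₂ := cokernel.desc _ e₂ hc2 with hrdef
  have her : cokernel.π (m₁ ≫ m₂) ≫ r = e₂ := cokernel.π_desc _ _ _
  have hmono : Mono w₁ := by
    apply mono_of_zero_of_map_zero
    intro x hx
    obtain ⟨y, hy⟩ := pseudo_surjective_of_epi e₁ x
    have h3 : (cokernel.π (m₁ ≫ m₂)) (m₂ y) = 0 := by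
      rw [← Abelian.Pseudoelement.comp_apply, ← hw₁, Abelian.Pseudoelement.comp_apply, hy, hx]
    obtain ⟨z, hz⟩ := hse.pexact (m₂ y) h3
    have h4 : m₂ (m₁ z) = m₂ y := by rw [← Abelian.Pseudoelement.comp_apply]; exact hz
    have h5 : m₁ z = y := pseudo_injective_of_mono m₂ h4
    rw [← hy, ← h5, ← Abelian.Pseudoelement.comp_apply, h1.zero_comp, Abelian.Pseudoelement.zero_apply]
  have hrepi : Epi r := epi_of_epi_fac her
  have hw₁r : w₁ ≫ r = 0 := by
    rw [← cancel_epi e₁, ← Category.assoc, hw₁, Category.assoc, her, h2.zero_comp, comp_zero]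
  refine ⟨cokernel (m₁ ≫ m₂), cokernel.π (m₁ ≫ m₂), w₁, r, hse, hw₁, ?_⟩
  refine ses_mk_pseudo hw₁r hmono hrepi ?_
  intro x hx
  obtain ⟨n, hn⟩ := pseudo_surjective_of_epi (cokernel.π (m₁ ≫ m₂)) x
  have h3 : e₂ n = 0 := by
    rw [← her, Abelian.Pseudoelement.comp_apply, hn, hx]
  obtain ⟨y, hy⟩ := h2.pexact n h3
  refine ⟨e₁ y, ?_⟩
  rw [← Abelian.Pseudoelement.comp_apply, hw₁, Abelian.Pseudoelement.comp_apply, hy, hn]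

lemma noether_epi {A P N B Z0 : 𝒜} {a : A ⟶ P} {q : P ⟶ N} {b : B ⟶ N} {g : N ⟶ Z0}
    (h1 : IsShortExactSeq a q) (h2 : IsShortExactSeq b g) :
    ∃ (K : 𝒜) (k : K ⟶ P) (abar : A ⟶ K) (β : K ⟶ B),
      IsShortExactSeq k (q ≫ g) ∧ abar ≫ k = a ∧ IsShortExactSeq abar β := by
  haveI := h1.mono'; haveI := h1.epi'; haveI := h2.mono'; haveI := h2.epi'
  haveI : Epi (q ≫ g) := epi_comp _ _
  have hse : IsShortExactSeq (kernel.ι (q ≫ g)) (q ≫ g) :=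
    ses_mk_kernel (kernel.condition _) inferInstance inferInstance (kernelIsKernel _)
  have hc1 : a ≫ q ≫ g = 0 := by rw [← Category.assoc, h1.zero_comp, zero_comp]
  set abar : A ⟶ kernel (q ≫ g) := kernel.lift _ a hc1 with habardef
  have habar : abar ≫ kernel.ι (q ≫ g) = a := kernel.lift_ι _ _ _
  have hc2 : (kernel.ι (q ≫ g) ≫ q) ≫ g = 0 := by rw [Category.assoc]; exact kernel.condition _
  obtain ⟨β, hβ⟩ := h2.lift (kernel.ι (q ≫ g) ≫ q) hc2
  haveI hamono : Mono abar := mono_of_mono_fac habar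
  have hβepi : Epi β := by
    apply epi_of_pseudo_surjective
    intro x
    obtain ⟨y, hy⟩ := pseudo_surjective_of_epi q (b x)
    have h3 : (q ≫ g) y = 0 := by
      rw [Abelian.Pseudoelement.comp_apply, hy, ← Abelian.Pseudoelement.comp_apply, h2.zero_comp,
        Abelian.Pseudoelement.zero_apply]
    obtain ⟨z, hz⟩ := hse.pexact y h3
    refine ⟨z, pseudo_injective_of_mono b ?_⟩
    rw [← Abelian.Pseudoelement.comp_apply, hβ, Abelian.Pseudoelement.comp_apply, hz, hy]
  have hab0 : abar ≫ β = 0 := by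
    apply zero_of_comp_mono b
    rw [Category.assoc, hβ, ← Category.assoc, habar, h1.zero_comp]
  refine ⟨kernel (q ≫ g), kernel.ι (q ≫ g), abar, β, hse, habar, ?_⟩
  refine ses_mk_pseudo hab0 hamono hβepi ?_
  intro z hz
  have h3 : q (kernel.ι (q ≫ g) z) = 0 := by
    rw [← Abelian.Pseudoelement.comp_apply, ← hβ, Abelian.Pseudoelement.comp_apply, hz,
      Abelian.Pseudoelement.apply_zero]
  obtain ⟨w, hw⟩ := h1.pexact _ h3
  refine ⟨w, pseudo_injective_of_mono (kernel.ι (q ≫ g)) ?_⟩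
  rw [← Abelian.Pseudoelement.comp_apply, habar, hw]


variable {E Cc Ip Zc : 𝒜 → Prop}

lemma CotorsionSetup.ccSubE (S : CotorsionSetup E Cc Ip Zc) {A : 𝒜} (h : Cc A) : E A :=
  ((S.cp.left_eq A).1 h).1

lemma CotorsionSetup.ipSubE (S : CotorsionSetup E Cc Ip Zc) {A : 𝒜} (h : Ip A) : E A :=
  ((S.cp.right_eq A).1 h).1

lemma CotorsionSetup.ext1Zero (S : CotorsionSetup E Cc Ip Zc) {A B : 𝒜} (hA : Cc A) (hB : Ip B) :
    Ext1IsZero E A B :=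
  ((S.cp.left_eq A).1 hA).2 hB

lemma cc_ext_closed (S : CotorsionSetup E Cc Ip Zc) {A B C' : 𝒜} {f : A ⟶ B} {g : B ⟶ C'}
    (h : IsShortExactSeq f g) (hA : Cc A) (hC : Cc C') : Cc B := by
  refine (S.cp.left_eq B).2 ⟨S.extClosedE f g h (S.ccSubE hA) (S.ccSubE hC), ?_⟩
  intro Y0 hY0 M u v hM huv
  obtain ⟨k', hk'f, hk's, hses1⟩ := ses_pullback huv f
  have hEpb : E (pullback v f) := S.extClosedE _ _ hses1 (S.ipSubE hY0) (S.ccSubE hA)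
  obtain ⟨r', hr'⟩ := S.ext1Zero hA hY0 k' (pullback.snd v f) hEpb hses1
  obtain ⟨σ, hσ⟩ := ses_section_of_retraction hses1 r' hr'
  have hs2 : (σ ≫ pullback.fst v f) ≫ v = f := by
    rw [Category.assoc, pullback.condition, ← Category.assoc, hσ, Category.id_comp]
  obtain ⟨M'', e, r, hse, her, hser⟩ := ses_quotient h huv (σ ≫ pullback.fst v f) hs2
  have hEM'' : E M'' := S.extClosedE _ _ hser (S.ipSubE hY0) (S.ccSubE hC)
  obtain ⟨ρ, hρ⟩ := S.ext1Zero hC hY0 (u ≫ e) r hEM'' hser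
  exact ⟨e ≫ ρ, by rw [← Category.assoc, hρ]⟩

lemma ip_ext_closed (S : CotorsionSetup E Cc Ip Zc) {A B C' : 𝒜} {f : A ⟶ B} {g : B ⟶ C'}
    (h : IsShortExactSeq f g) (hA : Ip A) (hC : Ip C') : Ip B := by
  refine (S.cp.right_eq B).2 ⟨S.extClosedE f g h (S.ipSubE hA) (S.ipSubE hC), ?_⟩
  intro X0 hX0 M u v hM huv
  haveI := h.epi'
  obtain ⟨v₁, hinl, hinr0, hses1⟩ := ses_pushout huv g
  have hE1 : E (pushout u g) := S.extClosedE _ _ hses1 (S.ipSubE hC) (S.ccSubE hX0)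
  obtain ⟨r₁, hr₁⟩ := S.ext1Zero hX0 hC (pushout.inr u g) v₁ hE1 hses1
  have hφ : u ≫ pushout.inl u g ≫ r₁ = g := by
    rw [← Category.assoc, pushout.condition, Category.assoc, hr₁, Category.comp_id]
  haveI hφepi : Epi (pushout.inl u g ≫ r₁) := epi_of_epi_fac hφ
  have hmφ : IsShortExactSeq (kernel.ι (pushout.inl u g ≫ r₁)) (pushout.inl u g ≫ r₁) :=
    ses_mk_kernel (kernel.condition _) inferInstance inferInstance (kernelIsKernel _)
  have hkc : f ≫ u ≫ pushout.inl u g ≫ r₁ = 0 := by rw [hφ, h.zero_comp]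
  have hkc' : (f ≫ u) ≫ pushout.inl u g ≫ r₁ = 0 := by rw [Category.assoc]; exact hkc
  have hk : kernel.lift _ (f ≫ u) hkc' ≫ kernel.ι (pushout.inl u g ≫ r₁) = f ≫ u :=
    kernel.lift_ι _ _ _
  have hsesk : IsShortExactSeq (kernel.lift _ (f ≫ u) hkc')
      (kernel.ι (pushout.inl u g ≫ r₁) ≫ v) := ses_sub h huv hmφ hφ hk
  have hEk : E (kernel (pushout.inl u g ≫ r₁)) :=
    S.extClosedE _ _ hsesk (S.ipSubE hA) (S.ccSubE hX0)
  obtain ⟨ρ₀, hρ₀⟩ := S.ext1Zero hX0 hA _ _ hEk hsesk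
  obtain ⟨σ₀, hσ₀⟩ := ses_section_of_retraction hsesk ρ₀ hρ₀
  exact ses_retraction_of_section huv (σ₀ ≫ kernel.ι (pushout.inl u g ≫ r₁))
    (by rw [Category.assoc]; exact hσ₀)

lemma interchange (S : CotorsionSetup E Cc Ip Zc) {K M Y0 N W : 𝒜}
    {k : K ⟶ M} {p : M ⟶ Y0} {i : Y0 ⟶ N} {c : N ⟶ W}
    (hkp : IsShortExactSeq k p) (hic : IsShortExactSeq i c)
    (hK : Ip K) (hW : Cc W) (hWZ : Zc W) (hM : Cc M) (hY : Cc Y0) (hN : Cc N) :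
    ∃ (P : 𝒜) (j : M ⟶ P) (q : P ⟶ N),
      IsAcyclicCofib Cc Zc j ∧ IsAcyclicFib E Ip q ∧ j ≫ q = p ≫ i := by
  obtain ⟨I_N, P_N, ι, π, hI_N, hP_N, hιπ⟩ := S.complete.2 N (S.ccSubE hN)
  haveI := hιπ.epi'
  obtain ⟨ι', hι'fst, hι'snd, hses1⟩ := ses_pullback hιπ i
  have hses2 : IsShortExactSeq (pullback.fst π i) (π ≫ c) := ses_pullback_fst inferInstance hic
  have hEY' : E (pullback π i) := S.extClosedE _ _ hses1 (S.ipSubE hI_N) (S.ccSubE hY)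
  have hCY' : Cc (pullback π i) := S.hereditary _ _ hses2 hEY' hP_N hW
  obtain ⟨ktil, hkfst, hksnd, hses3⟩ := ses_pullback hkp (pullback.snd π i)
  have hEM' : E (pullback p (pullback.snd π i)) :=
    S.extClosedE _ _ hses3 (S.ipSubE hK) hEY'
  obtain ⟨r₃, hr₃⟩ := S.ext1Zero hCY' hK ktil _ hEM' hses3
  obtain ⟨s', hs'⟩ := ses_section_of_retraction hses3 r₃ hr₃
  have hτ : (s' ≫ pullback.fst p (pullback.snd π i)) ≫ p = pullback.snd π i := by
    rw [Category.assoc, pullback.condition, ← Category.assoc, hs', Category.id_comp]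
  obtain ⟨d, hinl, hinr, hses4⟩ := ses_pushout hses2 (s' ≫ pullback.fst p (pullback.snd π i))
  have hqcond : pullback.fst π i ≫ π =
      (s' ≫ pullback.fst p (pullback.snd π i)) ≫ (p ≫ i) := by
    rw [← Category.assoc, hτ, pullback.condition]
  have hjq : pushout.inr (pullback.fst π i) (s' ≫ pullback.fst p (pullback.snd π i)) ≫
      pushout.desc π (p ≫ i) hqcond = p ≫ i := pushout.inr_desc _ _ _
  have hqc : pushout.desc π (p ≫ i) hqcond ≫ c = d := by
    apply pushout.hom_ext
    · rw [← Category.assoc, pushout.inl_desc, hinl]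
    · rw [← Category.assoc, hjq, Category.assoc, hic.zero_comp, comp_zero, hinr]
  have hses5 : IsShortExactSeq
      (k ≫ pushout.inr (pullback.fst π i) (s' ≫ pullback.fst p (pullback.snd π i)))
      (pushout.desc π (p ≫ i) hqcond) := ses_comp_of_square hkp hses4 hic hjq hqc
  have hCP : Cc (pushout (pullback.fst π i) (s' ≫ pullback.fst p (pullback.snd π i))) :=
    cc_ext_closed S hses4 hM hW
  exact ⟨_, _, _, ⟨hM, hCP, W, d, hW, hWZ, hses4⟩,
    ⟨S.ccSubE hCP, S.ccSubE hN, K, _, hK, hses5⟩, hjq⟩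

end WEHelpers

/-- In the standing setup, the composite of two weak
equivalences (between objects of `Cc`) is a weak equivalence. -/
theorem weakEquiv_comp
    (E Cc Ip Zc : 𝒜 → Prop) (S : CotorsionSetup E Cc Ip Zc)
    {X Y Z : 𝒜} (f : X ⟶ Y) (g : Y ⟶ Z)
    (hf : IsWeakEquiv E Cc Ip Zc f) (hg : IsWeakEquiv E Cc Ip Zc g) :
    IsWeakEquiv E Cc Ip Zc (f ≫ g) := by
  obtain ⟨hCX, hCY, Mf, i_f, p_f, ⟨-, hCMf, Wf, cf, hCWf, hZWf, hif⟩,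
    ⟨hEMf, hEY, Kf, kf, hKf, hkf⟩, hfac_f⟩ := hf
  obtain ⟨-, hCZ, Mg, i_g, p_g, ⟨-, hCMg, Wg, cg, hCWg, hZWg, hig⟩,
    ⟨hEMg, hEZ, Kg, kg, hKg, hkg⟩, hfac_g⟩ := hg
  obtain ⟨P, j, q, ⟨-, hCP, Wj, dj, hCWj, hZWj, hsesj⟩, ⟨-, -, Kq, kq, hKq, hsesq⟩, hjq⟩ :=
    interchange S hkf hig hKf hCWg hZWg hCMf hCY hCMg
  obtain ⟨W', e, w₁, r, hses_ij, hcomm, hsesW⟩ := noether_mono hif hsesj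
  have hCW' : Cc W' := cc_ext_closed S hsesW hCWf hCWj
  have hZW' : Zc W' := S.zcExtClosed _ _ hsesW hCWf hCW' hCWj hZWf hZWj
  obtain ⟨K', k', abar, β, hsesK, hak, hsesAB⟩ := noether_epi hsesq hkg
  have hIK' : Ip K' := ip_ext_closed S hsesAB hKq hKg
  refine ⟨hCX, hCZ, P, i_f ≫ j, q ≫ p_g, ⟨hCX, hCP, W', e, hCW', hZW', hses_ij⟩,
    ⟨S.ccSubE hCP, hEZ, K', k', hIK', hsesK⟩, ?_⟩
  rw [← hfac_f, ← hfac_g]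
  rw [Category.assoc, ← Category.assoc j, hjq]
  simp only [Category.assoc]
end

section
/- (Partial 2-out-of-3) Let f and g be composable morphisms in 𝒞 such that g and gf are weak equivalences. Then f is also a weak equivalence in each of the following cases: (i) g and gf are acyclic fibrations; (ii) g is an acyclic fibration and gf is an acyclic cofibration. -/
open CategoryTheory CategoryTheory.Limits

universe v u

variable {𝒜 : Type u} [Category.{v} 𝒜] [Abelian 𝒜]

namespace IsShortExactSeq

variable {X Y Z : 𝒜} {f : X ⟶ Y} {g : Y ⟶ Z}

lemma w (h : IsShortExactSeq f g) : f ≫ g = 0 := h.choose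

lemma shortExact (h : IsShortExactSeq f g) (w : f ≫ g = 0) :
    (ShortComplex.mk f g w).ShortExact := h.choose_spec

lemma mono_f (h : IsShortExactSeq f g) : Mono f := (h.shortExact h.w).mono_f
lemma epi_g (h : IsShortExactSeq f g) : Epi g := (h.shortExact h.w).epi_g

lemma lift' (h : IsShortExactSeq f g) {A : 𝒜} (k : A ⟶ Y) (hk : k ≫ g = 0) :
    ∃ l : A ⟶ X, l ≫ f = k := by
  have hse := h.shortExact h.w
  have := hse.mono_f
  exact hse.exact.lift' k hk

lemma desc' (h : IsShortExactSeq f g) {A : 𝒜} (k : Y ⟶ A) (hk : f ≫ k = 0) :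
    ∃ l : Z ⟶ A, g ≫ l = k := by
  have hse := h.shortExact h.w
  have := hse.epi_g
  exact hse.exact.desc' k hk

end IsShortExactSeq

lemma ses_mk {X Y Z : 𝒜} {f : X ⟶ Y} {g : Y ⟶ Z} (w : f ≫ g = 0)
    (hm : Mono f) (he : Epi g) (hex : (ShortComplex.mk f g w).Exact) :
    IsShortExactSeq f g :=
  ⟨w, ShortComplex.ShortExact.mk' hex hm he⟩

lemma ses_inl_snd (X K : 𝒜) :
    IsShortExactSeq (biprod.inl : X ⟶ X ⊞ K) biprod.snd :=
  ⟨by simp, ⟨(ShortComplex.Splitting.ofHasBinaryBiproduct X K).exact⟩⟩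

lemma ses_inr_fst (Y I : 𝒜) :
    IsShortExactSeq (biprod.inr : I ⟶ Y ⊞ I) biprod.fst := by
  refine ⟨by simp, ?_⟩
  have s : (ShortComplex.mk (biprod.inr : I ⟶ Y ⊞ I) biprod.fst (by simp)).Splitting :=
    { r := biprod.snd
      s := biprod.inl
      f_r := by simp
      s_g := by simp
      id := by dsimp; rw [add_comm]; exact biprod.total }
  exact ⟨s.exact⟩

lemma ses_coker {X Y : 𝒜} (f : X ⟶ Y) (hm : Mono f) :
    IsShortExactSeq f (cokernel.π f) :=
  ses_mk (cokernel.condition f) hm inferInstance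
    (ShortComplex.exact_of_g_is_cokernel _ (cokernelIsCokernel f))

lemma section_of_retraction {X Y Z : 𝒜} {f : X ⟶ Y} {g : Y ⟶ Z}
    (h : IsShortExactSeq f g) {r : Y ⟶ X} (hr : f ≫ r = 𝟙 X) :
    ∃ s : Z ⟶ Y, s ≫ g = 𝟙 Z := by
  have := h.epi_g
  obtain ⟨l, hl⟩ := h.desc' (𝟙 Y - r ≫ f) (by
    simp only [Preadditive.comp_sub, Category.comp_id, ← Category.assoc, hr,
      Category.id_comp, sub_self])
  refine ⟨l, ?_⟩
  have : g ≫ l ≫ g = g ≫ 𝟙 Z := by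
    rw [← Category.assoc, hl]
    simp [Preadditive.sub_comp, Category.assoc, h.w]
  exact (cancel_epi g).1 this

lemma ses_case_i {X Y Z K L : 𝒜} {f : X ⟶ Y} {g : Y ⟶ Z} {k : K ⟶ Y} {l : L ⟶ X}
    (hkg : IsShortExactSeq k g) (hl : IsShortExactSeq l (f ≫ g)) :
    ∃ m : L ⟶ K, IsShortExactSeq (biprod.lift l (-m)) (biprod.desc f k) := by
  have hmk := hkg.mono_f
  have hml := hl.mono_f
  have hefg := hl.epi_g
  obtain ⟨m, hm⟩ := hkg.lift' (l ≫ f) (by rw [Category.assoc, hl.w])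
  have w : biprod.lift l (-m) ≫ biprod.desc f k = 0 := by
    simp [hm]
  have hmono : Mono (biprod.lift l (-m)) := by
    have : Mono (biprod.lift l (-m) ≫ biprod.fst) := by simpa using hml
    exact mono_of_mono _ biprod.fst
  refine ⟨m, ses_mk w hmono ?_ ?_⟩
  · refine Preadditive.epi_of_cancel_zero _ (fun c hc => ?_)
    have hfc : f ≫ c = 0 := by simpa using biprod.inl ≫= hc
    have hkc : k ≫ c = 0 := by simpa using biprod.inr ≫= hc
    obtain ⟨d, hd⟩ := hkg.desc' c hkc
    have h0 : (f ≫ g) ≫ d = 0 := by rw [Category.assoc, hd, hfc]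
    have hd0 : d = 0 := zero_of_epi_comp (f ≫ g) h0
    rw [← hd, hd0, Limits.comp_zero]
  · apply ShortComplex.exact_of_f_is_kernel
    refine KernelFork.IsLimit.ofι' _ w (fun {T} t ht => ?_)
    have hdesc : (biprod.desc f k : X ⊞ K ⟶ Y) = biprod.fst ≫ f + biprod.snd ≫ k := by
      apply biprod.hom_ext' <;> simp
    have hsum : t ≫ biprod.fst ≫ f + t ≫ biprod.snd ≫ k = 0 := by
      rw [← Preadditive.comp_add, ← hdesc]; exact ht
    have hneg : t ≫ biprod.fst ≫ f = -(t ≫ biprod.snd ≫ k) :=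
      eq_neg_of_add_eq_zero_left hsum
    have hu : (t ≫ biprod.fst) ≫ (f ≫ g) = 0 := by
      have h2 : (t ≫ biprod.fst ≫ f) ≫ g = (-(t ≫ biprod.snd ≫ k)) ≫ g := by rw [hneg]
      have h3 : (t ≫ biprod.snd) ≫ k ≫ g = 0 := by rw [hkg.w, Limits.comp_zero]
      simp only [Category.assoc, Preadditive.neg_comp] at h2 h3 ⊢
      rw [h2, h3, neg_zero]
    have hv := (hl.lift' (t ≫ biprod.fst) hu).choose_spec
    refine ⟨(hl.lift' (t ≫ biprod.fst) hu).choose, ?_⟩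
    apply biprod.hom_ext
    · simpa [Category.assoc] using hv
    · set v := (hl.lift' (t ≫ biprod.fst) hu).choose
      have : v ≫ biprod.lift l (-m) ≫ biprod.snd = -(v ≫ m) := by simp
      rw [Category.assoc, this, ← cancel_mono k]
      have h1 : (-(v ≫ m)) ≫ k = -((v ≫ l) ≫ f) := by
        simp only [Preadditive.neg_comp, Category.assoc, hm]
      rw [h1, hv]
      have := eq_neg_of_add_eq_zero_right hsum
      simp only [Category.assoc] at this ⊢
      rw [← this]

lemma ses_pullback_s14 {A M X Y : 𝒜} {f' : A ⟶ M} {g' : M ⟶ Y} (hfg : IsShortExactSeq f' g')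
    (a : X ⟶ Y) :
    ∃ (P : 𝒜) (α : A ⟶ P) (pX : P ⟶ X) (q : P ⟶ M),
      IsShortExactSeq α pX ∧ q ≫ g' = pX ≫ a ∧ α ≫ q = f' := by
  have hmf := hfg.mono_f
  have heg := hfg.epi_g
  set h : M ⊞ X ⟶ Y := biprod.fst ≫ g' - biprod.snd ≫ a with hh
  have hinl : biprod.inl ≫ h = g' := by simp [hh]
  have heh : Epi h := epi_of_epi_fac hinl
  set κ := kernel.ι h with hκ
  have hcond : κ ≫ biprod.fst ≫ g' = κ ≫ biprod.snd ≫ a := by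
    have := kernel.condition h
    rw [hh, Preadditive.comp_sub, sub_eq_zero] at this
    exact this
  have hlift0 : biprod.lift f' (0 : A ⟶ X) ≫ h = 0 := by
    simp [hh, hfg.w]
  set α := kernel.lift h (biprod.lift f' 0) hlift0 with hα
  have hακ : α ≫ κ = biprod.lift f' 0 := kernel.lift_ι _ _ _
  have hαq : α ≫ (κ ≫ biprod.fst) = f' := by rw [← Category.assoc, hακ]; simp
  have hαp : α ≫ (κ ≫ biprod.snd) = 0 := by rw [← Category.assoc, hακ]; simp
  have hmα : Mono α := by
    have : Mono (α ≫ (κ ≫ biprod.fst)) := by rw [hαq]; exact hmf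
    exact mono_of_mono α (κ ≫ biprod.fst)
  have exκ : (ShortComplex.mk κ h (kernel.condition h)).Exact :=
    ShortComplex.exact_of_f_is_kernel _ (kernelIsKernel h)
  refine ⟨kernel h, α, κ ≫ biprod.snd, κ ≫ biprod.fst, ses_mk hαp hmα ?_ ?_,
    by simpa [Category.assoc] using hcond, hαq⟩
  · refine Preadditive.epi_of_cancel_zero _ (fun c hc => ?_)
    obtain ⟨e, he⟩ := exκ.desc' (biprod.snd ≫ c) (by
      simpa [Category.assoc] using hc)
    have h1 : g' ≫ e = 0 := by
      rw [← hinl, Category.assoc, he]; simp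
    have he0 : e = 0 := zero_of_epi_comp g' h1
    have hsc : (biprod.snd : M ⊞ X ⟶ X) ≫ c = 0 := by rw [← he, he0, Limits.comp_zero]
    exact zero_of_epi_comp (biprod.snd : M ⊞ X ⟶ X) hsc
  · apply ShortComplex.exact_of_f_is_kernel
    refine KernelFork.IsLimit.ofι' _ hαp (fun {T} t ht => ?_)
    have ht' : t ≫ κ ≫ biprod.snd = 0 := by simpa [Category.assoc] using ht
    have hu : (t ≫ κ ≫ biprod.fst) ≫ g' = 0 := by
      have h1 : t ≫ κ ≫ biprod.fst ≫ g' = t ≫ κ ≫ biprod.snd ≫ a := by rw [hcond]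
      have h2 : (t ≫ κ ≫ biprod.snd) ≫ a = 0 := by rw [ht', Limits.zero_comp]
      simp only [Category.assoc] at h1 h2 ⊢
      rw [h1, h2]
    have hv := (hfg.lift' (t ≫ κ ≫ biprod.fst) hu).choose_spec
    refine ⟨(hfg.lift' (t ≫ κ ≫ biprod.fst) hu).choose, ?_⟩
    rw [← cancel_mono κ, Category.assoc, hακ]
    apply biprod.hom_ext
    · simpa [Category.assoc] using hv
    · simpa [Category.assoc] using ht'.symm

lemma ses_quotient_s14 {A M X Y Z : 𝒜} {f' : A ⟶ M} {g' : M ⟶ Y} {a : X ⟶ Y} {b : Y ⟶ Z}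
    (hfg : IsShortExactSeq f' g') (hab : IsShortExactSeq a b)
    {t : X ⟶ M} (ht : t ≫ g' = a) :
    IsShortExactSeq (f' ≫ cokernel.π t) (cokernel.desc t (g' ≫ b)
      (by rw [← Category.assoc, ht, hab.w])) := by
  have hma := hab.mono_f
  have heb := hab.epi_g
  have hmf := hfg.mono_f
  have heg := hfg.epi_g
  have hmt : Mono t := mono_of_mono_fac ht
  have sest := ses_coker t hmt
  have hπd : cokernel.π t ≫ cokernel.desc t (g' ≫ b) (by rw [← Category.assoc, ht, hab.w])
      = g' ≫ b := cokernel.π_desc _ _ _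
  have w0 : (f' ≫ cokernel.π t) ≫ cokernel.desc t (g' ≫ b)
      (by rw [← Category.assoc, ht, hab.w]) = 0 := by
    rw [Category.assoc, hπd, ← Category.assoc, hfg.w, Limits.zero_comp]
  have hmono : Mono (f' ≫ cokernel.π t) := by
    refine Preadditive.mono_of_cancel_zero _ (fun u hu => ?_)
    obtain ⟨v, hv⟩ := sest.lift' (u ≫ f') (by rwa [Category.assoc])
    have : v ≫ a = 0 := by
      rw [← ht, ← Category.assoc, hv, Category.assoc, hfg.w, Limits.comp_zero]
    have hv0 : v = 0 := zero_of_comp_mono a this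
    have : u ≫ f' = 0 := by rw [← hv, hv0, Limits.zero_comp]
    exact zero_of_comp_mono f' this
  have hepi : Epi (cokernel.desc t (g' ≫ b) (by rw [← Category.assoc, ht, hab.w])) := by
    refine Preadditive.epi_of_cancel_zero _ (fun c hc => ?_)
    have h1 : g' ≫ b ≫ c = 0 := by
      have := hπd.symm.trans (rfl : cokernel.π t ≫ _ = cokernel.π t ≫ _)
      rw [← Category.assoc, ← hπd, Category.assoc, hc, Limits.comp_zero]
    have h2 : b ≫ c = 0 := zero_of_epi_comp g' h1
    exact zero_of_epi_comp b h2
  refine ses_mk w0 hmono hepi ?_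
  apply ShortComplex.exact_of_g_is_cokernel
  refine CokernelCofork.IsColimit.ofπ' _ w0 (fun {T} kk hkk => ?_)
  have he₁ := (hfg.desc' (cokernel.π t ≫ kk) (by rwa [← Category.assoc])).choose_spec
  set e₁ := (hfg.desc' (cokernel.π t ≫ kk) (by rwa [← Category.assoc])).choose with he₁def
  have hae : a ≫ e₁ = 0 := by
    rw [← ht, Category.assoc, he₁, ← Category.assoc, cokernel.condition, Limits.zero_comp]
  have he₂ := (hab.desc' e₁ hae).choose_spec
  refine ⟨(hab.desc' e₁ hae).choose, ?_⟩
  rw [← cancel_epi (cokernel.π t), ← Category.assoc, hπd, Category.assoc, he₂, he₁]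

lemma ses_S1 {X Y I : 𝒜} (f : X ⟶ Y) (j : X ⟶ I) (hf : Mono f) (hj : Mono j) :
    IsShortExactSeq (biprod.inr ≫ cokernel.π (biprod.lift f j) : I ⟶ _)
      (cokernel.desc (biprod.lift f j) (biprod.fst ≫ cokernel.π f) (by rw [← Category.assoc, biprod.lift_fst, cokernel.condition])) := by
  set i := biprod.lift f j with hi
  have hmi : Mono i := by
    have : Mono (i ≫ biprod.snd) := by simpa [hi] using hj
    exact mono_of_mono i biprod.snd
  have sesi := ses_coker i hmi
  set π := cokernel.π i with hπ
  set d := cokernel.desc i (biprod.fst ≫ cokernel.π f) (by rw [← Category.assoc, biprod.lift_fst, cokernel.condition]) with hd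
  have hπd : π ≫ d = biprod.fst ≫ cokernel.π f := cokernel.π_desc _ _ _
  have w0 : (biprod.inr ≫ π) ≫ d = 0 := by
    rw [Category.assoc, hπd, ← Category.assoc]
    simp
  have hmono : Mono (biprod.inr ≫ π : I ⟶ _) := by
    refine Preadditive.mono_of_cancel_zero _ (fun u hu => ?_)
    obtain ⟨v, hv⟩ := sesi.lift' (u ≫ biprod.inr) (by rwa [Category.assoc])
    have h1 : v ≫ f = 0 := by
      have := hv =≫ biprod.fst
      simpa [hi, Category.assoc] using this
    have hv0 : v = 0 := zero_of_comp_mono f h1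
    have h2 : u ≫ (biprod.inr : I ⟶ Y ⊞ I) = 0 := by rw [← hv, hv0, Limits.zero_comp]
    exact zero_of_comp_mono _ h2
  have hepi : Epi d := by
    refine Preadditive.epi_of_cancel_zero _ (fun c hc => ?_)
    have h1 : (biprod.fst : Y ⊞ I ⟶ Y) ≫ cokernel.π f ≫ c = 0 := by
      rw [← Category.assoc, ← hπd, Category.assoc, hc, Limits.comp_zero]
    have h2 : cokernel.π f ≫ c = 0 := zero_of_epi_comp (biprod.fst : Y ⊞ I ⟶ Y) h1
    exact zero_of_epi_comp _ h2
  refine ses_mk w0 hmono hepi ?_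
  apply ShortComplex.exact_of_g_is_cokernel
  refine CokernelCofork.IsColimit.ofπ' _ w0 (fun {T} kk hkk => ?_)
  set e : Y ⟶ T := biprod.inl ≫ π ≫ kk with he
  have hπk : π ≫ kk = biprod.fst ≫ e := by
    apply biprod.hom_ext'
    · simp [he]
    · have h2 : biprod.inr ≫ π ≫ kk = 0 := by rw [← Category.assoc]; exact hkk
      rw [h2, ← Category.assoc, biprod.inr_fst, Limits.zero_comp]
  have hfe : f ≫ e = 0 := by
    have h1 : i ≫ π ≫ kk = 0 := by rw [← Category.assoc, cokernel.condition, Limits.zero_comp]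
    rw [hπk, ← Category.assoc] at h1
    simpa [hi] using h1
  refine ⟨cokernel.desc f e hfe, ?_⟩
  rw [← cancel_epi π, ← Category.assoc, hπd, Category.assoc, cokernel.π_desc, ← hπk]

lemma ses_S2 {X Y Z K W : 𝒜} {f : X ⟶ Y} {g : Y ⟶ Z} {k : K ⟶ Y} {wm : Z ⟶ W}
    (hkg : IsShortExactSeq k g) (hw : IsShortExactSeq (f ≫ g) wm) :
    IsShortExactSeq (k ≫ cokernel.π f)
      (cokernel.desc f (g ≫ wm) (by rw [← Category.assoc, hw.w])) := by
  have hmfg := hw.mono_f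
  have hewm := hw.epi_g
  have hmk := hkg.mono_f
  have heg := hkg.epi_g
  have hmf : Mono f := mono_of_mono f g
  have sesf := ses_coker f hmf
  set e := cokernel.desc f (g ≫ wm) (by rw [← Category.assoc, hw.w]) with hee
  have hπe : cokernel.π f ≫ e = g ≫ wm := cokernel.π_desc _ _ _
  have w0 : (k ≫ cokernel.π f) ≫ e = 0 := by
    rw [Category.assoc, hπe, ← Category.assoc, hkg.w, Limits.zero_comp]
  have hmono : Mono (k ≫ cokernel.π f) := by
    refine Preadditive.mono_of_cancel_zero _ (fun u hu => ?_)
    obtain ⟨v, hv⟩ := sesf.lift' (u ≫ k) (by rwa [Category.assoc])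
    have h1 : v ≫ (f ≫ g) = 0 := by
      rw [← Category.assoc, hv, Category.assoc, hkg.w, Limits.comp_zero]
    have hv0 : v = 0 := zero_of_comp_mono _ h1
    have h2 : u ≫ k = 0 := by rw [← hv, hv0, Limits.zero_comp]
    exact zero_of_comp_mono _ h2
  have hepi : Epi e := by
    refine Preadditive.epi_of_cancel_zero _ (fun c hc => ?_)
    have h1 : g ≫ wm ≫ c = 0 := by
      rw [← Category.assoc, ← hπe, Category.assoc, hc, Limits.comp_zero]
    have h2 : wm ≫ c = 0 := zero_of_epi_comp g h1
    exact zero_of_epi_comp wm h2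
  refine ses_mk w0 hmono hepi ?_
  apply ShortComplex.exact_of_g_is_cokernel
  refine CokernelCofork.IsColimit.ofπ' _ w0 (fun {T} kk hkk => ?_)
  have he₁ := (hkg.desc' (cokernel.π f ≫ kk) (by rwa [← Category.assoc])).choose_spec
  set e₁ := (hkg.desc' (cokernel.π f ≫ kk) (by rwa [← Category.assoc])).choose with he₁d
  have hfge : (f ≫ g) ≫ e₁ = 0 := by
    rw [Category.assoc, he₁, ← Category.assoc, cokernel.condition, Limits.zero_comp]
  have he₂ := (hw.desc' e₁ hfge).choose_spec
  refine ⟨(hw.desc' e₁ hfge).choose, ?_⟩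
  rw [← cancel_epi (cokernel.π f), ← Category.assoc, hπe, Category.assoc, he₂, he₁]

lemma cp_left_E {E Cc Ip : 𝒜 → Prop} (cp : IsCotorsionPair E Cc Ip)
    {X : 𝒜} (h : Cc X) : E X := ((cp.left_eq X).1 h).1

lemma cp_right_E {E Cc Ip : 𝒜 → Prop} (cp : IsCotorsionPair E Cc Ip)
    {Y : 𝒜} (h : Ip Y) : E Y := ((cp.right_eq Y).1 h).1

lemma cp_ext1 {E Cc Ip : 𝒜 → Prop} (cp : IsCotorsionPair E Cc Ip)
    {X Y : 𝒜} (hX : Cc X) (hY : Ip Y) : Ext1IsZero E X Y :=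
  ((cp.left_eq X).1 hX).2 hY

lemma cc_ext_closed_s14 {E Cc Ip Zc : 𝒜 → Prop} (S : CotorsionSetup E Cc Ip Zc)
    {X Y Z : 𝒜} {a : X ⟶ Y} {b : Y ⟶ Z} (hab : IsShortExactSeq a b)
    (hX : Cc X) (hZ : Cc Z) : Cc Y := by
  have hEX : E X := cp_left_E S.cp hX
  have hEZ : E Z := cp_left_E S.cp hZ
  have hEY : E Y := S.extClosedE a b hab hEX hEZ
  rw [S.cp.left_eq]
  refine ⟨hEY, fun A hA => ?_⟩
  intro M f' g' hM hfg
  obtain ⟨P, α, pX, q, hses, hq, hαq⟩ := ses_pullback_s14 hfg a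
  have hEP : E P := S.extClosedE α pX hses (cp_right_E S.cp hA) hEX
  obtain ⟨r₁, hr₁⟩ := cp_ext1 S.cp hX hA α pX hEP hses
  obtain ⟨s, hs⟩ := section_of_retraction hses hr₁
  have ht : (s ≫ q) ≫ g' = a := by
    rw [Category.assoc, hq, ← Category.assoc, hs, Category.id_comp]
  have hquot := ses_quotient_s14 hfg hab ht
  have hEQ : E (cokernel (s ≫ q)) := S.extClosedE _ _ hquot (cp_right_E S.cp hA) hEZ
  obtain ⟨r₂, hr₂⟩ := cp_ext1 S.cp hZ hA _ _ hEQ hquot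
  exact ⟨cokernel.π (s ≫ q) ≫ r₂, by rw [← Category.assoc]; exact hr₂⟩


/-- **Partial 2-out-of-3.** In the standing setup, let `f` and
`g` be composable morphisms in `Cc` such that `g` and `g ∘ f` are weak
equivalences.  Then `f` is also a weak equivalence in each of the following
cases: (i) `g` and `g ∘ f` are acyclic fibrations; (ii) `g` is an acyclic
fibration and `g ∘ f` is an acyclic cofibration. -/
theorem partial_two_out_of_three
    (E Cc Ip Zc : 𝒜 → Prop) (S : CotorsionSetup E Cc Ip Zc)
    {X Y Z : 𝒜} (f : X ⟶ Y) (g : Y ⟶ Z)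
    (hX : Cc X) (hY : Cc Y) (hZ : Cc Z) :
    ((IsAcyclicFib E Ip g ∧ IsAcyclicFib E Ip (f ≫ g)) →
      IsWeakEquiv E Cc Ip Zc f) ∧
    ((IsAcyclicFib E Ip g ∧ IsAcyclicCofib Cc Zc (f ≫ g)) →
      IsWeakEquiv E Cc Ip Zc f) := by
  have hEX : E X := cp_left_E S.cp hX
  have hEY : E Y := cp_left_E S.cp hY
  constructor
  · rintro ⟨⟨hEY', hEZ', K, k, hK, hkg⟩, ⟨hEX', hEZ'', L, l, hL, hlfg⟩⟩
    have hCcK : Cc K := S.hereditary k g hkg (cp_right_E S.cp hK) hY hZ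
    have hCcL : Cc L := S.hereditary l (f ≫ g) hlfg (cp_right_E S.cp hL) hX hZ
    obtain ⟨m, hses⟩ := ses_case_i hkg hlfg
    have hXK : Cc (X ⊞ K) := cc_ext_closed_s14 S (ses_inl_snd X K) hX hCcK
    have hEXK : E (X ⊞ K) := S.extClosedE _ _ (ses_inl_snd X K) hEX (cp_right_E S.cp hK)
    refine ⟨hX, hY, X ⊞ K, biprod.inl, biprod.desc f k, ?_, ?_, by simp⟩
    · exact ⟨hX, hXK, K, biprod.snd, hCcK, S.iSubZ hK, ses_inl_snd X K⟩
    · exact ⟨hEXK, hEY, L, biprod.lift l (-m), hL, hses⟩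
  · rintro ⟨⟨hEY', hEZ', K, k, hK, hkg⟩, ⟨hCcX', hCcZ', W, wm, hCcW, hZcW, hfgw⟩⟩
    obtain ⟨I, P, j, c, hI, hP, hjc⟩ := S.complete.1 X hEX
    have hCcI : Cc I := cc_ext_closed_s14 S hjc hX hP
    have hMonoFg : Mono (f ≫ g) := hfgw.mono_f
    have hMonoF : Mono f := mono_of_mono f g
    have hMonoJ : Mono j := hjc.mono_f
    have hMonoI : Mono (biprod.lift f j) := by
      have : Mono (biprod.lift f j ≫ biprod.snd) := by simpa using hMonoJ
      exact mono_of_mono _ biprod.snd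
    have hCcK : Cc K := S.hereditary k g hkg (cp_right_E S.cp hK) hY hZ
    have sesS2 := ses_S2 hkg hfgw
    have hCcQ : Cc (cokernel f) := cc_ext_closed_s14 S sesS2 hCcK hCcW
    have hZcQ : Zc (cokernel f) :=
      S.zcExtClosed _ _ sesS2 hCcK hCcQ hCcW (S.iSubZ hK) hZcW
    have sesS1 := ses_S1 f j hMonoF hMonoJ
    have hCcC : Cc (cokernel (biprod.lift f j)) := cc_ext_closed_s14 S sesS1 hCcI hCcQ
    have hZcC : Zc (cokernel (biprod.lift f j)) :=
      S.zcExtClosed _ _ sesS1 hCcI hCcC hCcQ (S.iSubZ hI) hZcQ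
    have hCcYI : Cc (Y ⊞ I) := cc_ext_closed_s14 S (ses_inl_snd Y I) hY hCcI
    have hEYI : E (Y ⊞ I) := S.extClosedE _ _ (ses_inl_snd Y I) hEY (cp_right_E S.cp hI)
    refine ⟨hX, hY, Y ⊞ I, biprod.lift f j, biprod.fst, ?_, ?_, by simp⟩
    · exact ⟨hX, hCcYI, cokernel (biprod.lift f j), cokernel.π (biprod.lift f j),
        hCcC, hZcC, ses_coker _ hMonoI⟩
    · exact ⟨hEYI, hEY, I, biprod.inr, hI, ses_inr_fst Y I⟩
end
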